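/- arXiv:math/0201109 — 3 statements merged into one kernel-verified Lean document; each statement's English description precedes it below -/
import Mathlib

section
/- Let μ be a probability measure on [0, 1] with density f with respect to Lebesgue measure, and suppose there are constants c > 0, δ > 0, C > 0 such that |f(x) − c| ≤ C (1 − x)^δ for all x ∈ [0, 1). Then, with ζ_μ(k) = ∑_{j=1}^∞ m_j^k the moment zeta function of μ, there is a constant C′ such that |∑_{k=2}^n (−1)^k C(n,k) ζ_μ(k) − c n log n| ≤ C′ n for all n ≥ 2. -/
open MeasureTheory Filter Finset

/- Auxiliary elementary lemmas -/

private lemma phi_eq' (n : ℕ) (hn : 2 ≤ n) (x : ℝ) :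
    ∑ k ∈ Icc 2 n, (-1 : ℝ) ^ k * (n.choose k : ℝ) * x ^ k
      = (1 - x) ^ n - 1 + n * x := by
  have h : (1 - x) ^ n = ∑ k ∈ Finset.range (n + 1), (-x) ^ k * 1 ^ (n - k) * (n.choose k : ℝ) := by
    rw [← add_pow]; ring_nf
  have hsplit : ∑ k ∈ Finset.range (n + 1), (-x) ^ k * 1 ^ (n - k) * (n.choose k : ℝ)
      = (∑ k ∈ Finset.Ico 0 2, (-x) ^ k * 1 ^ (n - k) * (n.choose k : ℝ))
        + ∑ k ∈ Finset.Ico 2 (n+1), (-x) ^ k * 1 ^ (n - k) * (n.choose k : ℝ) := by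
    rw [Finset.range_eq_Ico, ← Finset.sum_Ico_consecutive _ (show 0 ≤ 2 by omega) (show 2 ≤ n+1 by omega)]
  have h2 : ∑ k ∈ Finset.Ico 0 2, (-x) ^ k * 1 ^ (n - k) * (n.choose k : ℝ) = 1 - n * x := by
    rw [show (2:ℕ) = 0 + 1 + 1 by rfl]
    rw [Finset.sum_Ico_succ_top (by omega), Finset.sum_Ico_succ_top (by omega)]
    simp [Nat.choose_one_right]; ring
  have h3 : Finset.Ico 2 (n+1) = Icc 2 n := by rw [Finset.Ico_add_one_right_eq_Icc]
  have h4 : ∀ k ∈ Icc 2 n, (-x) ^ k * 1 ^ (n - k) * (n.choose k : ℝ)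
      = (-1 : ℝ) ^ k * (n.choose k : ℝ) * x ^ k := by
    intro k _; rw [neg_pow]; ring
  rw [h, hsplit, h2, h3, Finset.sum_congr rfl h4]; ring

private lemma phi_nonneg' (n : ℕ) {x : ℝ} (hx0 : 0 ≤ x) (hx1 : x ≤ 1) :
    0 ≤ (1 - x) ^ n - 1 + n * x := by
  have := one_add_mul_le_pow (a := -x) (by linarith) n
  simp only [mul_neg] at this
  have h2 : (1 + -x) ^ n = (1 - x) ^ n := by ring_nf
  linarith [h2 ▸ this]

private lemma phi_le_lin' (n : ℕ) {x : ℝ} (hx0 : 0 ≤ x) (hx1 : x ≤ 1) :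
    (1 - x) ^ n - 1 + n * x ≤ n * x := by
  nlinarith [pow_le_one₀ (by linarith : (0:ℝ) ≤ 1 - x) (by linarith : (1:ℝ) - x ≤ 1) (n := n)]

private lemma phi_ge_lin' (n : ℕ) {x : ℝ} (hx0 : 0 ≤ x) (hx1 : x ≤ 1) :
    n * x - 1 ≤ (1 - x) ^ n - 1 + n * x := by
  nlinarith [pow_nonneg (by linarith : (0:ℝ) ≤ 1 - x) n]

private lemma pow_quad_bound' (n : ℕ) {x : ℝ} (hx0 : 0 ≤ x) (hx1 : x ≤ 1) :
    (1 - x) ^ n ≤ 1 - n * x + (n : ℝ) * n * x ^ 2 / 2 := by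
  induction n with
  | zero => simp
  | succ n ih =>
    have key : (1 - x) ^ (n+1) = (1 - x) * (1 - x) ^ n := by ring
    have hq : (0:ℝ) ≤ 1 - n * x + (n : ℝ) * n * x ^ 2 / 2 := by
      nlinarith [pow_nonneg (by linarith : (0:ℝ) ≤ 1 - x) n, ih]
    have h2 : (1 - x) * (1 - x) ^ n ≤ (1 - x) * (1 - n * x + (n : ℝ) * n * x ^ 2 / 2) :=
      mul_le_mul_of_nonneg_left ih (by linarith)
    push_cast
    nlinarith [sq_nonneg x, mul_nonneg (mul_nonneg (Nat.cast_nonneg (α := ℝ) n) hx0) (sq_nonneg x)]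

private lemma phi_le_quad' (n : ℕ) {x : ℝ} (hx0 : 0 ≤ x) (hx1 : x ≤ 1) :
    (1 - x) ^ n - 1 + n * x ≤ (n : ℝ) * n * x ^ 2 / 2 := by
  nlinarith [pow_quad_bound' n hx0 hx1]

private lemma sum_inv_le_log' (N : ℕ) :
    ∑ j ∈ range N, (1 : ℝ) / (j + 2) ≤ Real.log (N + 1) := by
  induction N with
  | zero => simp
  | succ N ih =>
    rw [Finset.sum_range_succ]
    have h1 : Real.log ((N:ℝ) + 1) + 1 / ((N:ℝ) + 2) ≤ Real.log ((N:ℝ) + 1 + 1) := by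
      have hpos : (0:ℝ) < (N:ℝ) + 1 := by positivity
      have hpos2 : (0:ℝ) < (N:ℝ) + 2 := by positivity
      have hlog := Real.log_le_sub_one_of_pos (show (0:ℝ) < ((N:ℝ)+1)/((N:ℝ)+2) by positivity)
      rw [Real.log_div (by linarith) (by linarith)] at hlog
      have : ((N:ℝ)+1)/((N:ℝ)+2) - 1 = -(1/((N:ℝ)+2)) := by field_simp; ring
      rw [this] at hlog
      have he : (N:ℝ) + 1 + 1 = (N:ℝ) + 2 := by ring
      rw [he]; linarith
    push_cast
    linarith [ih]

private lemma log_le_sum_inv' (N : ℕ) :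
    Real.log (N + 2) - Real.log 2 ≤ ∑ j ∈ range N, (1 : ℝ) / (j + 2) := by
  induction N with
  | zero => simp
  | succ N ih =>
    rw [Finset.sum_range_succ]
    have h1 : Real.log ((N:ℝ) + 1 + 2) - Real.log ((N:ℝ) + 2) ≤ 1 / ((N:ℝ) + 2) := by
      have hpos2 : (0:ℝ) < (N:ℝ) + 2 := by positivity
      have hlog := Real.log_le_sub_one_of_pos (show (0:ℝ) < ((N:ℝ)+3)/((N:ℝ)+2) by positivity)
      rw [Real.log_div (by linarith) (by linarith)] at hlog
      have : ((N:ℝ)+3)/((N:ℝ)+2) - 1 = 1/((N:ℝ)+2) := by field_simp; ring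
      rw [this] at hlog
      have h3 : (N:ℝ) + 1 + 2 = (N:ℝ) + 3 := by ring
      rw [h3]; linarith
    push_cast
    linarith [ih]

private lemma tele_sum' (s J : ℕ) :
    ∑ i ∈ range J, ((1:ℝ) / ((i:ℝ) + s + 1) - 1 / ((i:ℝ) + s + 2))
      = 1 / ((s:ℝ) + 1) - 1 / ((J:ℝ) + s + 1) := by
  have := Finset.sum_range_sub' (f := fun i : ℕ => (1:ℝ) / ((i:ℝ) + s + 1)) J
  rw [show ((0:ℕ):ℝ) + (s:ℝ) + 1 = (s:ℝ) + 1 by push_cast; ring] at this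
  rw [← this]
  apply Finset.sum_congr rfl
  intro i _
  norm_num
  push_cast
  ring

private lemma inv_prod_eq' (i s : ℕ) :
    (1:ℝ) / (((i:ℝ) + s + 1) * ((i:ℝ) + s + 2)) = 1 / ((i:ℝ) + s + 1) - 1 / ((i:ℝ) + s + 2) := by
  have h1 : (0:ℝ) < (i:ℝ) + s + 1 := by positivity
  have h2 : (0:ℝ) < (i:ℝ) + s + 2 := by positivity
  field_simp
  ring

/- Integral lemmas -/

private lemma cont_w' {δ : ℝ} (hδ : 0 < δ) : Continuous (fun x : ℝ => (1 - x) ^ δ) := by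
  have h : Continuous (fun y : ℝ => y ^ δ) :=
    continuous_iff_continuousAt.2 fun x => Real.continuousAt_rpow_const x δ (Or.inr hδ.le)
  exact h.comp (continuous_const.sub continuous_id)

private lemma integrable_xj_w' {δ : ℝ} (hδ : 0 < δ) (j : ℕ) :
    IntegrableOn (fun x : ℝ => x ^ j * (1 - x) ^ δ) (Set.Icc 0 1) volume :=
  ((continuous_pow j).mul (cont_w' hδ)).continuousOn.integrableOn_compact isCompact_Icc

private lemma integral_xj' : ∀ j : ℕ, ∫ x in Set.Icc (0:ℝ) 1, x ^ j = 1 / ((j:ℝ) + 1) := by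
  intro j
  rw [integral_Icc_eq_integral_Ioc, ← intervalIntegral.integral_of_le (by norm_num : (0:ℝ) ≤ 1)]
  rw [integral_pow]
  norm_num

private lemma Ij_nonneg' {δ : ℝ} (hδ : 0 < δ) (j : ℕ) :
    0 ≤ ∫ x in Set.Icc (0:ℝ) 1, x ^ j * (1 - x) ^ δ := by
  apply setIntegral_nonneg measurableSet_Icc
  intro x hx
  have h1 : (0:ℝ) ≤ 1 - x := by linarith [hx.2]
  exact mul_nonneg (pow_nonneg hx.1 j) (Real.rpow_nonneg h1 δ)

private lemma Ij_le' {δ : ℝ} (hδ : 0 < δ) (j : ℕ) :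
    ∫ x in Set.Icc (0:ℝ) 1, x ^ j * (1 - x) ^ δ ≤ 1 / ((j:ℝ) + 1) := by
  rw [← integral_xj' j]
  apply setIntegral_mono_on (integrable_xj_w' hδ j)
    ((continuous_pow j).continuousOn.integrableOn_compact isCompact_Icc) measurableSet_Icc
  intro x hx
  have h1 : (0:ℝ) ≤ 1 - x := by linarith [hx.2]
  have h2 : (1 - x) ^ δ ≤ 1 := Real.rpow_le_one h1 (by linarith [hx.1]) hδ.le
  have h3 : (0:ℝ) ≤ x ^ j := pow_nonneg hx.1 j
  nlinarith

private lemma integrable_w_pow' {δ : ℝ} (hδ : 0 < δ) :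
    IntegrableOn (fun x : ℝ => (1 - x) ^ (δ - 1)) (Set.Ioo 0 1) volume := by
  have h1 : IntervalIntegrable (fun x : ℝ => x ^ (δ - 1)) volume 0 1 :=
    intervalIntegral.intervalIntegrable_rpow' (by linarith)
  have h2 := h1.comp_sub_left 1
  norm_num at h2
  have h3 := h2.symm
  rw [intervalIntegrable_iff_integrableOn_Ioo_of_le (by norm_num : (0:ℝ) ≤ 1)] at h3
  exact h3

private lemma integral_w_pow' {δ : ℝ} (hδ : 0 < δ) :
    ∫ x in Set.Ioo (0:ℝ) 1, (1 - x) ^ (δ - 1) = 1 / δ := by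
  have h0 : ∫ x in Set.Ioo (0:ℝ) 1, (1 - x) ^ (δ - 1)
      = ∫ x in (0:ℝ)..1, (1 - x) ^ (δ - 1) := by
    rw [intervalIntegral.integral_of_le (by norm_num : (0:ℝ) ≤ 1),
      integral_Ioc_eq_integral_Ioo]
  rw [h0, intervalIntegral.integral_comp_sub_left (fun x => x ^ (δ - 1)) 1]
  norm_num
  rw [integral_rpow (Or.inl (by linarith))]
  rw [Real.zero_rpow (by linarith), Real.one_rpow]
  norm_num

private lemma geom_bound' {x : ℝ} (hx0 : 0 ≤ x) (hx1 : x < 1) (N : ℕ) :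
    (∑ j ∈ range N, x ^ (j + 1)) * (1 - x) ≤ 1 := by
  have htel : (∑ j ∈ range N, x ^ (j + 1)) * (1 - x) = x - x ^ (N + 1) := by
    have h := Finset.sum_range_sub' (f := fun j : ℕ => x ^ (j + 1)) N
    calc (∑ j ∈ range N, x ^ (j + 1)) * (1 - x)
        = ∑ i ∈ range N, (x ^ (i + 1) - x ^ (i + 1 + 1)) := by
          rw [Finset.sum_mul]; apply Finset.sum_congr rfl; intro i _; ring
      _ = x ^ (0 + 1) - x ^ (N + 1) := h
      _ = x - x ^ (N + 1) := by ring
  rw [htel]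
  nlinarith [pow_nonneg hx0 (N + 1)]

private lemma Isum_le' {δ : ℝ} (hδ : 0 < δ) (N : ℕ) :
    ∑ j ∈ range N, ∫ x in Set.Icc (0:ℝ) 1, x ^ (j+1) * (1 - x) ^ δ ≤ 1 / δ := by
  rw [← integral_finset_sum _ (fun j _ => integrable_xj_w' hδ (j+1))]
  rw [← integral_w_pow' hδ]
  rw [integral_Icc_eq_integral_Ioo]
  apply setIntegral_mono_on
  · exact IntegrableOn.mono_set (integrable_finset_sum _ (fun j _ => integrable_xj_w' hδ (j+1)))
      Set.Ioo_subset_Icc_self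
  · exact integrable_w_pow' hδ
  · exact measurableSet_Ioo
  intro x hx
  obtain ⟨hx0, hx1⟩ := hx
  have h1 : (0:ℝ) < 1 - x := by linarith
  have hw : (0:ℝ) ≤ (1 - x) ^ δ := Real.rpow_nonneg h1.le δ
  have key : (∑ j ∈ range N, x ^ (j + 1)) * (1 - x) ^ δ ≤ (1 - x) ^ (δ - 1) := by
    have hrw : (1 - x) ^ (δ - 1) = (1 - x) ^ δ / (1 - x) := by
      rw [Real.rpow_sub h1, Real.rpow_one]
    rw [hrw]
    rw [div_eq_mul_inv, mul_comm ((1-x)^δ) _]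
    rw [← sub_nonneg]
    have : (1 - x)⁻¹ * (1 - x) ^ δ - (∑ j ∈ range N, x ^ (j + 1)) * (1 - x) ^ δ
        = ((1 - x)⁻¹ - ∑ j ∈ range N, x ^ (j + 1)) * (1 - x) ^ δ := by ring
    rw [this]
    apply mul_nonneg _ hw
    rw [sub_nonneg]
    rw [← mul_le_mul_iff_of_pos_right h1, inv_mul_cancel₀ h1.ne']
    exact geom_bound' hx0.le hx1 N
  calc ∑ j ∈ range N, x ^ (j+1) * (1 - x) ^ δ
      = (∑ j ∈ range N, x ^ (j + 1)) * (1 - x) ^ δ := by rw [Finset.sum_mul]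
    _ ≤ (1 - x) ^ (δ - 1) := key

/- Moment lemmas -/

section
variable (f : ℝ → ℝ) (c δ C : ℝ) (hc : 0 < c) (hδ : 0 < δ) (hC : 0 < C)
    (hf_nonneg : ∀ x ∈ Set.Icc (0 : ℝ) 1, 0 ≤ f x)
    (hf_int : IntegrableOn f (Set.Icc (0 : ℝ) 1) volume)
    (hf_prob : ∫ x in Set.Icc (0 : ℝ) 1, f x = 1)
    (hf_asymp : ∀ x ∈ Set.Ico (0 : ℝ) 1, |f x - c| ≤ C * (1 - x) ^ δ)

include hf_nonneg hf_int in
private lemma hint' (j : ℕ) : IntegrableOn (fun x => x ^ j * f x) (Set.Icc (0:ℝ) 1) volume := by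
  have hmeas : AEStronglyMeasurable (fun x : ℝ => x ^ j * f x)
      (volume.restrict (Set.Icc 0 1)) :=
    AEStronglyMeasurable.mul (continuous_pow j).aestronglyMeasurable hf_int.1
  apply Integrable.mono' hf_int hmeas
  rw [ae_restrict_iff' measurableSet_Icc]
  filter_upwards with x hx
  obtain ⟨h0, h1⟩ := hx
  have hfx := hf_nonneg x ⟨h0, h1⟩
  rw [Real.norm_eq_abs, abs_of_nonneg (mul_nonneg (pow_nonneg h0 j) hfx)]
  nlinarith [pow_le_one₀ h0 h1 (n := j), pow_nonneg h0 j]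

include hf_nonneg in
private lemma hm_nonneg' (j : ℕ) : 0 ≤ ∫ x in Set.Icc (0:ℝ) 1, x ^ j * f x := by
  apply setIntegral_nonneg measurableSet_Icc
  intro x hx
  exact mul_nonneg (pow_nonneg hx.1 j) (hf_nonneg x hx)

include hf_nonneg hf_int hf_prob in
private lemma hm_le_one' (j : ℕ) : ∫ x in Set.Icc (0:ℝ) 1, x ^ j * f x ≤ 1 := by
  refine le_trans (setIntegral_mono_on (hint' f hf_nonneg hf_int j) hf_int
    measurableSet_Icc ?_) (le_of_eq hf_prob)
  intro x hx
  nlinarith [pow_le_one₀ hx.1 hx.2 (n := j), hf_nonneg x hx, pow_nonneg hx.1 j]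

include hδ hf_nonneg hf_int hf_asymp in
private lemma hm_close' (j : ℕ) :
    |(∫ x in Set.Icc (0:ℝ) 1, x ^ j * f x) - c / ((j:ℝ) + 1)|
      ≤ C * ∫ x in Set.Icc (0:ℝ) 1, x ^ j * (1 - x) ^ δ := by
  have hxj : IntegrableOn (fun x : ℝ => x ^ j) (Set.Icc (0:ℝ) 1) volume :=
    (continuous_pow j).continuousOn.integrableOn_compact isCompact_Icc
  have hsub : IntegrableOn (fun x => x ^ j * f x - c * x ^ j) (Set.Icc (0:ℝ) 1) volume :=
    (hint' f hf_nonneg hf_int j).sub (hxj.const_mul c)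
  have heq : (∫ x in Set.Icc (0:ℝ) 1, x ^ j * f x) - c / ((j:ℝ) + 1)
      = ∫ x in Set.Icc (0:ℝ) 1, (x ^ j * f x - c * x ^ j) := by
    rw [integral_sub (hint' f hf_nonneg hf_int j) (hxj.const_mul c),
      integral_const_mul, integral_xj']
    ring
  rw [heq]
  have habs := norm_integral_le_integral_norm
    (f := fun x => x ^ j * f x - c * x ^ j) (μ := volume.restrict (Set.Icc (0:ℝ) 1))
  rw [Real.norm_eq_abs] at habs
  simp only [Real.norm_eq_abs] at habs
  refine le_trans habs ?_
  rw [← integral_const_mul]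
  apply integral_mono_ae hsub.abs ((integrable_xj_w' hδ j).const_mul C)
  have hne : ∀ᵐ x ∂(volume.restrict (Set.Icc (0:ℝ) 1)), x ≠ 1 := by
    refine (ae_iff.2 ?_)
    have : {x : ℝ | ¬ x ≠ 1} = {1} := by ext x; simp
    rw [this]
    exact le_antisymm (le_trans (Measure.restrict_apply_le _ _) (by simp)) zero_le
  filter_upwards [hne, ae_restrict_mem measurableSet_Icc] with x hx1 hx
  obtain ⟨h0, h1⟩ := hx
  have hx1' : x < 1 := lt_of_le_of_ne h1 hx1
  have hb := hf_asymp x ⟨h0, hx1'⟩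
  have hxjn : (0:ℝ) ≤ x ^ j := pow_nonneg h0 j
  have heq2 : |x ^ j * f x - c * x ^ j| = x ^ j * |f x - c| := by
    rw [show x ^ j * f x - c * x ^ j = x ^ j * (f x - c) by ring, abs_mul,
      abs_of_nonneg hxjn]
  rw [heq2]
  calc x ^ j * |f x - c| ≤ x ^ j * (C * (1 - x) ^ δ) :=
        mul_le_mul_of_nonneg_left hb hxjn
    _ = C * (x ^ j * (1 - x) ^ δ) := by ring
end

/-- Let `μ` be a probability measure on `[0,1]` with density
`f` with respect to Lebesgue measure, and suppose `|f x - c| ≤ C (1-x)^δ` for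
all `x ∈ [0,1)`, with `c, δ, C > 0`.  Then, with `ζ_μ(k) = ∑_{j≥1} (m j)^k` the
moment zeta function of `μ`, there is a constant `C'` with
`|∑_{k=2}^n (-1)^k C(n,k) ζ_μ(k) - c n log n| ≤ C' n` for all `n ≥ 2`. -/
theorem stmt_14 (f : ℝ → ℝ) (c δ C : ℝ) (hc : 0 < c) (hδ : 0 < δ) (hC : 0 < C)
    (hf_nonneg : ∀ x ∈ Set.Icc (0 : ℝ) 1, 0 ≤ f x)
    (hf_int : IntegrableOn f (Set.Icc (0 : ℝ) 1) volume)
    (hf_prob : ∫ x in Set.Icc (0 : ℝ) 1, f x = 1)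
    (hf_asymp : ∀ x ∈ Set.Ico (0 : ℝ) 1, |f x - c| ≤ C * (1 - x) ^ δ)
    (m : ℕ → ℝ) (hm : ∀ j, m j = ∫ x in Set.Icc (0 : ℝ) 1, x ^ j * f x) :
    ∃ C' : ℝ, ∀ n : ℕ, 2 ≤ n →
      |(∑ k ∈ Icc 2 n, (-1 : ℝ) ^ k * (n.choose k : ℝ) * ∑' j : ℕ, m (j + 1) ^ k)
          - c * n * Real.log n| ≤ C' * n := by
  set I : ℕ → ℝ := fun j => ∫ x in Set.Icc (0:ℝ) 1, x ^ j * (1 - x) ^ δ with hIdef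
  have hm0 : ∀ j, 0 ≤ m j := fun j => by
    rw [hm]; exact hm_nonneg' f hf_nonneg j
  have hm1 : ∀ j, m j ≤ 1 := fun j => by
    rw [hm]; exact hm_le_one' f hf_nonneg hf_int hf_prob j
  have hmc : ∀ j : ℕ, |m j - c / ((j:ℝ) + 1)| ≤ C * I j := fun j => by
    rw [hm]; exact hm_close' f c δ C hδ hf_nonneg hf_int hf_asymp j
  have hI0 : ∀ j, 0 ≤ I j := fun j => Ij_nonneg' hδ j
  have hIle : ∀ j, I j ≤ 1 / ((j:ℝ) + 1) := fun j => Ij_le' hδ j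
  set K := c + C with hKdef
  have hK0 : 0 < K := by positivity
  -- bound on a j := m (j+1)
  have haK : ∀ j : ℕ, m (j+1) ≤ K / ((j:ℝ) + 2) := by
    intro j
    have h1 := (abs_le.1 (hmc (j+1))).2
    have h2 : C * I (j+1) ≤ C * (1 / (((j+1:ℕ):ℝ) + 1)) :=
      mul_le_mul_of_nonneg_left (hIle (j+1)) hC.le
    have h3 : (((j+1:ℕ):ℝ)) = (j:ℝ) + 1 := by push_cast; ring
    rw [h3] at h1 h2
    have h4 : (j:ℝ) + 1 + 1 = (j:ℝ) + 2 := by ring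
    rw [h4] at h1 h2
    have : m (j+1) ≤ c / ((j:ℝ)+2) + C * (1/((j:ℝ)+2)) := by linarith
    have hpos : (0:ℝ) < (j:ℝ) + 2 := by positivity
    rw [hKdef]
    rw [show (c + C) / ((j:ℝ)+2) = c/((j:ℝ)+2) + C * (1/((j:ℝ)+2)) by field_simp]
    exact this
  have haub : ∀ j : ℕ, m (j+1) ≤ c / ((j:ℝ) + 2) + C * I (j+1) := by
    intro j
    have h1 := (abs_le.1 (hmc (j+1))).2
    have h3 : (((j+1:ℕ):ℝ)) + 1 = (j:ℝ) + 2 := by push_cast; ring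
    rw [h3] at h1
    linarith
  have halb : ∀ j : ℕ, c / ((j:ℝ) + 2) - C * I (j+1) ≤ m (j+1) := by
    intro j
    have h1 := (abs_le.1 (hmc (j+1))).1
    have h3 : (((j+1:ℕ):ℝ)) + 1 = (j:ℝ) + 2 := by push_cast; ring
    rw [h3] at h1
    linarith
  -- summability basics
  have hbase : Summable (fun j : ℕ => 1 / ((j:ℝ)+1)^2) := by
    have h := (summable_nat_add_iff (f := fun n : ℕ => 1 / (n:ℝ)^2) 1).2
      ((Real.summable_one_div_nat_pow (p := 2)).2 (by norm_num))
    apply h.congr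
    intro j
    push_cast
    ring
  have hsq : ∀ j : ℕ, m (j+1)^2 ≤ K^2 * (1/((j:ℝ)+1)^2) := by
    intro j
    have h1 : m (j+1) ≤ K / ((j:ℝ)+1) := by
      refine le_trans (haK j) ?_
      apply div_le_div_of_nonneg_left hK0.le (by positivity) (by linarith)
    have h2 : m (j+1)^2 ≤ (K / ((j:ℝ)+1))^2 := by
      apply pow_le_pow_left₀ (hm0 _) h1
    refine le_trans h2 (le_of_eq ?_)
    field_simp
  have hsummk : ∀ k : ℕ, 2 ≤ k → Summable (fun j : ℕ => m (j+1) ^ k) := by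
    intro k hk
    apply Summable.of_nonneg_of_le (fun j => pow_nonneg (hm0 _) k) (fun j => ?_)
      (hbase.mul_left (K^2))
    calc m (j+1) ^ k ≤ m (j+1) ^ 2 := pow_le_pow_of_le_one (hm0 _) (hm1 _) hk
      _ ≤ K^2 * (1/((j:ℝ)+1)^2) := hsq j
  -- the swap
  have hswap : ∀ n : ℕ, 2 ≤ n →
      (∑ k ∈ Icc 2 n, (-1:ℝ)^k * (n.choose k : ℝ) * ∑' j : ℕ, m (j+1)^k)
        = ∑' j : ℕ, ((1 - m (j+1))^n - 1 + n * m (j+1)) := by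
    intro n hn
    have h1 : ∀ k ∈ Icc 2 n, (-1:ℝ)^k * (n.choose k:ℝ) * ∑' j : ℕ, m (j+1)^k
        = ∑' j : ℕ, (-1:ℝ)^k * (n.choose k:ℝ) * m (j+1)^k := by
      intro k hk
      rw [mul_assoc, ← tsum_mul_left, ← tsum_mul_left]
      apply tsum_congr; intro j; ring
    rw [Finset.sum_congr rfl h1]
    rw [← Summable.tsum_finsetSum (fun k hk => Summable.mul_left _
      (hsummk k (Finset.mem_Icc.1 hk).1))]
    apply tsum_congr
    intro j
    exact phi_eq' n hn (m (j+1))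
  -- choose the constant
  refine ⟨c * Real.log 2 + C / δ + K^2/2 + 1, ?_⟩
  intro n hn
  have hn1 : (1:ℝ) ≤ (n:ℝ) := by exact_mod_cast Nat.one_le_of_lt hn
  have hn2 : (2:ℝ) ≤ (n:ℝ) := by exact_mod_cast hn
  have hnpos : (0:ℝ) < (n:ℝ) := by linarith
  rw [hswap n hn]
  set φ : ℕ → ℝ := fun j => (1 - m (j+1))^n - 1 + n * m (j+1) with hφdef
  have hφ0 : ∀ j, 0 ≤ φ j := fun j => phi_nonneg' n (hm0 _) (hm1 _)
  have hφquad : ∀ j : ℕ, φ j ≤ ((n:ℝ)*n*K^2/2) * (1/((j:ℝ)+1)^2) := by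
    intro j
    refine le_trans (phi_le_quad' n (hm0 _) (hm1 _)) ?_
    have := hsq j
    have hnn : (0:ℝ) ≤ (n:ℝ)*(n:ℝ)/2 := by positivity
    calc (n:ℝ) * n * m (j+1)^2 / 2 = ((n:ℝ)*(n:ℝ)/2) * m (j+1)^2 := by ring
      _ ≤ ((n:ℝ)*(n:ℝ)/2) * (K^2 * (1/((j:ℝ)+1)^2)) := mul_le_mul_of_nonneg_left (hsq j) hnn
      _ = ((n:ℝ)*n*K^2/2) * (1/((j:ℝ)+1)^2) := by ring
  have hφsumm : Summable φ := by
    apply Summable.of_nonneg_of_le hφ0 hφquad (hbase.mul_left _)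
  -- head sums
  have hIsum : ∑ j ∈ range n, I (j+1) ≤ 1/δ := Isum_le' hδ n
  have hIsum0 : 0 ≤ ∑ j ∈ range n, I (j+1) := Finset.sum_nonneg (fun j _ => hI0 _)
  have hlog_ub : Real.log ((n:ℝ)+1) ≤ Real.log 2 + Real.log n := by
    rw [← Real.log_mul (by norm_num) (by linarith)]
    apply Real.log_le_log (by linarith)
    linarith
  have hlog_lb : Real.log (n:ℝ) - Real.log 2 ≤ Real.log ((n:ℝ)+2) - Real.log 2 := by
    have := Real.log_le_log hnpos (show (n:ℝ) ≤ (n:ℝ)+2 by linarith)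
    linarith
  have hhead_ub : ∑ j ∈ range n, m (j+1) ≤ c * (Real.log 2 + Real.log n) + C/δ := by
    have h1 : ∑ j ∈ range n, m (j+1)
        ≤ ∑ j ∈ range n, (c / ((j:ℝ)+2) + C * I (j+1)) :=
      Finset.sum_le_sum (fun j _ => haub j)
    rw [Finset.sum_add_distrib] at h1
    have h2 : ∑ j ∈ range n, c / ((j:ℝ)+2) = c * ∑ j ∈ range n, 1/((j:ℝ)+2) := by
      rw [Finset.mul_sum]; apply Finset.sum_congr rfl; intro j _; ring
    have h3 : ∑ j ∈ range n, C * I (j+1) = C * ∑ j ∈ range n, I (j+1) := by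
      rw [Finset.mul_sum]
    rw [h2, h3] at h1
    have h4 : c * ∑ j ∈ range n, 1/((j:ℝ)+2) ≤ c * Real.log ((n:ℝ)+1) :=
      mul_le_mul_of_nonneg_left (sum_inv_le_log' n) hc.le
    have h5 : C * ∑ j ∈ range n, I (j+1) ≤ C * (1/δ) :=
      mul_le_mul_of_nonneg_left hIsum hC.le
    have h6 : c * Real.log ((n:ℝ)+1) ≤ c * (Real.log 2 + Real.log n) :=
      mul_le_mul_of_nonneg_left hlog_ub hc.le
    have h7 : C * (1/δ) = C/δ := by ring
    linarith
  have hhead_lb : c * (Real.log n - Real.log 2) - C/δ ≤ ∑ j ∈ range n, m (j+1) := by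
    have h1 : ∑ j ∈ range n, (c / ((j:ℝ)+2) - C * I (j+1)) ≤ ∑ j ∈ range n, m (j+1) :=
      Finset.sum_le_sum (fun j _ => halb j)
    rw [Finset.sum_sub_distrib] at h1
    have h2 : ∑ j ∈ range n, c / ((j:ℝ)+2) = c * ∑ j ∈ range n, 1/((j:ℝ)+2) := by
      rw [Finset.mul_sum]; apply Finset.sum_congr rfl; intro j _; ring
    have h3 : ∑ j ∈ range n, C * I (j+1) = C * ∑ j ∈ range n, I (j+1) := by
      rw [Finset.mul_sum]
    rw [h2, h3] at h1
    have h4 : c * (Real.log ((n:ℝ)+2) - Real.log 2) ≤ c * ∑ j ∈ range n, 1/((j:ℝ)+2) :=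
      mul_le_mul_of_nonneg_left (log_le_sum_inv' n) hc.le
    have h5 : C * ∑ j ∈ range n, I (j+1) ≤ C * (1/δ) :=
      mul_le_mul_of_nonneg_left hIsum hC.le
    have h6 : c * (Real.log n - Real.log 2) ≤ c * (Real.log ((n:ℝ)+2) - Real.log 2) :=
      mul_le_mul_of_nonneg_left hlog_lb hc.le
    have h7 : C * (1/δ) = C/δ := by ring
    linarith
  -- split head and tail
  have hsplit := Summable.sum_add_tsum_nat_add (f := φ) n hφsumm
  -- tail bound
  have htail_ub : (∑' i : ℕ, φ (i + n)) ≤ (K^2/2) * n := by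
    apply Real.tsum_le_of_sum_range_le (fun i => hφ0 _)
    intro J
    have hstep : ∀ i : ℕ, φ (i + n)
        ≤ ((n:ℝ)*n*K^2/2) * (1/((i:ℝ)+n+1) - 1/((i:ℝ)+n+2)) := by
      intro i
      rw [← inv_prod_eq' i n]
      refine le_trans (phi_le_quad' n (hm0 _) (hm1 _)) ?_
      have hb : m (i+n+1) ≤ K / ((i:ℝ)+(n:ℝ)+2) := by
        have := haK (i+n)
        rwa [show (((i+n:ℕ)):ℝ) + 2 = (i:ℝ)+(n:ℝ)+2 by push_cast; ring] at this
      have hb2 : m (i+n+1)^2 ≤ K^2 / (((i:ℝ)+(n:ℝ)+2)^2) := by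
        have := pow_le_pow_left₀ (hm0 _) hb 2
        rwa [div_pow] at this
      have hp1 : (0:ℝ) < (i:ℝ)+(n:ℝ)+1 := by positivity
      have hp2 : (0:ℝ) < (i:ℝ)+(n:ℝ)+2 := by positivity
      have hb3 : K^2 / (((i:ℝ)+(n:ℝ)+2)^2)
          ≤ K^2 * (1/(((i:ℝ)+n+1)*((i:ℝ)+n+2))) := by
        rw [div_eq_mul_inv, ← one_div]
        apply mul_le_mul_of_nonneg_left _ (sq_nonneg K)
        apply one_div_le_one_div_of_le (by positivity)
        nlinarith
      have harr : (i + n + 1 : ℕ) = (i + n) + 1 := by omega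
      calc (n:ℝ) * n * m ((i+n)+1)^2 / 2
          = ((n:ℝ)*(n:ℝ)/2) * m ((i+n)+1)^2 := by ring
        _ ≤ ((n:ℝ)*(n:ℝ)/2) * (K^2 * (1/(((i:ℝ)+n+1)*((i:ℝ)+n+2)))) := by
            apply mul_le_mul_of_nonneg_left _ (by positivity)
            calc m ((i+n)+1)^2 ≤ K^2 / (((i:ℝ)+(n:ℝ)+2)^2) := hb2
              _ ≤ K^2 * (1/(((i:ℝ)+n+1)*((i:ℝ)+n+2))) := hb3
        _ = ((n:ℝ)*n*K^2/2) * (1/(((i:ℝ)+n+1)*((i:ℝ)+n+2))) := by ring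
    have hsum2 : ∑ i ∈ range J, φ (i + n)
        ≤ ((n:ℝ)*n*K^2/2) * ∑ i ∈ range J, (1/((i:ℝ)+n+1) - 1/((i:ℝ)+n+2)) := by
      rw [Finset.mul_sum]
      exact Finset.sum_le_sum (fun i _ => hstep i)
    rw [tele_sum' n J] at hsum2
    have hfin : ((n:ℝ)*n*K^2/2) * (1/((n:ℝ)+1) - 1/((J:ℝ)+(n:ℝ)+1)) ≤ (K^2/2) * n := by
      have hp : (0:ℝ) < (n:ℝ)+1 := by positivity
      have h1 : (0:ℝ) ≤ 1/((J:ℝ)+(n:ℝ)+1) := by positivity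
      have h2 : ((n:ℝ)*n*K^2/2) * (1/((n:ℝ)+1) - 1/((J:ℝ)+(n:ℝ)+1))
          ≤ ((n:ℝ)*n*K^2/2) * (1/((n:ℝ)+1)) :=
        mul_le_mul_of_nonneg_left (by linarith) (by positivity)
      have h4 : ((n:ℝ)*n*K^2/2) * (1/((n:ℝ)+1)) ≤ (K^2/2) * n := by
        rw [mul_one_div, div_le_iff₀ hp]
        nlinarith [sq_nonneg K, hnpos]
      linarith
    linarith
  -- head bounds on φ
  have hheadφ_ub : ∑ j ∈ range n, φ j ≤ (n:ℝ) * (c * (Real.log 2 + Real.log n) + C/δ) := by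
    have h1 : ∑ j ∈ range n, φ j ≤ ∑ j ∈ range n, (n:ℝ) * m (j+1) :=
      Finset.sum_le_sum (fun j _ => phi_le_lin' n (hm0 _) (hm1 _))
    have h2 : ∑ j ∈ range n, (n:ℝ) * m (j+1) = (n:ℝ) * ∑ j ∈ range n, m (j+1) := by
      rw [Finset.mul_sum]
    rw [h2] at h1
    refine le_trans h1 (mul_le_mul_of_nonneg_left hhead_ub hnpos.le)
  have hheadφ_lb : (n:ℝ) * (c * (Real.log n - Real.log 2) - C/δ) - (n:ℝ)
      ≤ ∑ j ∈ range n, φ j := by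
    have h1 : ∑ j ∈ range n, ((n:ℝ) * m (j+1) - 1) ≤ ∑ j ∈ range n, φ j :=
      Finset.sum_le_sum (fun j _ => phi_ge_lin' n (hm0 _) (hm1 _))
    rw [Finset.sum_sub_distrib, ← Finset.mul_sum] at h1
    simp only [Finset.sum_const, Finset.card_range, nsmul_eq_mul, mul_one] at h1
    have h2 : (n:ℝ) * (c * (Real.log n - Real.log 2) - C/δ)
        ≤ (n:ℝ) * ∑ j ∈ range n, m (j+1) :=
      mul_le_mul_of_nonneg_left hhead_lb hnpos.le
    linarith
  -- tail is nonneg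
  have htail0 : 0 ≤ ∑' i : ℕ, φ (i + n) :=
    tsum_nonneg (fun i => hφ0 _)
  -- conclude
  rw [abs_le]
  constructor
  · have heq : (∑' j, φ j) = (∑ j ∈ range n, φ j) + ∑' i, φ (i + n) := hsplit.symm
    rw [heq]
    have hK2n : 0 ≤ (K^2/2) * (n:ℝ) := by positivity
    have hexp : (n:ℝ) * (c * (Real.log n - Real.log 2) - C/δ) - (n:ℝ)
        = c * n * Real.log n - (c * Real.log 2 + C/δ + 1) * n := by ring
    linarith [hheadφ_lb, htail0]
  · have heq : (∑' j, φ j) = (∑ j ∈ range n, φ j) + ∑' i, φ (i + n) := hsplit.symm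
    rw [heq]
    have hexp : (n:ℝ) * (c * (Real.log 2 + Real.log n) + C/δ) + (K^2/2) * (n:ℝ)
        = c * n * Real.log n + (c * Real.log 2 + C/δ + K^2/2) * n := by ring
    linarith [hheadφ_ub, htail_ub]
end

section
/- Let ζ denote the Riemann zeta function, Γ the Gamma function, and let s > 1 be a real number. Then lim_{n→∞} n^{−1/s} ∑_{k=1}^n (−1)^k C(n,k) ζ(s k) = −Γ(1 − 1/s); equivalently, −∑_{k=1}^n (−1)^k C(n,k) ζ(s k) is asymptotic to Γ(1 − 1/s) n^{1/s} as n → ∞. -/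
open Finset Filter
open scoped Topology

section Aux
open Real Set MeasureTheory

lemma binom_id (n : ℕ) (hn : 1 ≤ n) (x : ℝ) :
    ∑ k ∈ Finset.Icc 1 n, (-1 : ℝ) ^ k * (n.choose k : ℝ) * x ^ k = (1 - x) ^ n - 1 := by
  have h : (1 - x) ^ n = ∑ k ∈ Finset.range (n + 1), (-x) ^ k * 1 ^ (n - k) * (n.choose k : ℝ) := by
    rw [show (1 : ℝ) - x = -x + 1 by ring, add_pow]
  have hr : Finset.range (n+1) = insert 0 (Finset.Icc 1 n) := by
    ext m; simp only [Finset.mem_range, Finset.mem_insert, Finset.mem_Icc]; omega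
  rw [hr, Finset.sum_insert (by simp)] at h
  simp only [pow_zero, one_pow, one_mul, Nat.choose_zero_right, Nat.cast_one, mul_one] at h
  rw [h]
  rw [add_comm, add_sub_cancel_right]
  apply Finset.sum_congr rfl
  intro k hk
  rw [neg_pow]
  ring

lemma summable_shift (p : ℝ) (hp : 1 < p) :
    Summable (fun j : ℕ => ((j : ℝ) + 1) ^ (-p)) := by
  have : Summable (fun j : ℕ => ((j + 1 : ℕ) : ℝ) ^ (-p)) :=
    (summable_nat_add_iff 1).2 (Real.summable_nat_rpow.2 (by linarith))
  simpa [Nat.cast_add, Nat.cast_one] using this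

lemma one_sub_pow_le (n : ℕ) (t : ℝ) (ht : t ≤ 2) : 1 - (1 - t) ^ n ≤ n * t := by
  have := one_add_mul_le_pow (a := -t) (by linarith) n
  simp only [mul_neg, ← sub_eq_add_neg] at this
  nlinarith [this]

end Aux

section Aux2
open Real Set MeasureTheory

lemma sum_eq (s : ℝ) (hs : 1 < s) (n : ℕ) (hn : 1 ≤ n) :
    ∑ k ∈ Finset.Icc 1 n, (-1 : ℝ) ^ k * (n.choose k : ℝ)
        * ∑' j : ℕ, ((j : ℝ) + 1) ^ (-(s * k)) =
      ∑' j : ℕ, ((1 - ((j : ℝ) + 1) ^ (-s)) ^ n - 1) := by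
  have hbase : ∀ j : ℕ, (0:ℝ) ≤ (j : ℝ) + 1 := fun j => by positivity
  have hrw : ∀ (k : ℕ) (j : ℕ), ((j : ℝ) + 1) ^ (-(s * k)) = (((j : ℝ) + 1) ^ (-s)) ^ k := by
    intro k j
    rw [show -(s * (k:ℕ)) = (-s) * (k:ℕ) by ring, Real.rpow_mul (hbase j), Real.rpow_natCast]
  have hsummable : ∀ k ∈ Finset.Icc 1 n,
      Summable (fun j : ℕ => (-1 : ℝ) ^ k * (n.choose k : ℝ) * ((j : ℝ) + 1) ^ (-(s * k))) := by
    intro k hk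
    apply Summable.mul_left
    apply summable_shift
    have hk1 : 1 ≤ k := (Finset.mem_Icc.1 hk).1
    calc (1:ℝ) < s := hs
    _ = s * 1 := by ring
    _ ≤ s * k := by
        apply mul_le_mul_of_nonneg_left _ (by linarith)
        exact_mod_cast hk1
  calc ∑ k ∈ Finset.Icc 1 n, (-1 : ℝ) ^ k * (n.choose k : ℝ) * ∑' j : ℕ, ((j : ℝ) + 1) ^ (-(s * k))
      = ∑ k ∈ Finset.Icc 1 n, ∑' j : ℕ, (-1 : ℝ) ^ k * (n.choose k : ℝ) * ((j : ℝ) + 1) ^ (-(s * k)) := by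
        apply Finset.sum_congr rfl; intro k _; rw [tsum_mul_left]
    _ = ∑' j : ℕ, ∑ k ∈ Finset.Icc 1 n, (-1 : ℝ) ^ k * (n.choose k : ℝ) * ((j : ℝ) + 1) ^ (-(s * k)) :=
        (Summable.tsum_finsetSum hsummable).symm
    _ = ∑' j : ℕ, ((1 - ((j : ℝ) + 1) ^ (-s)) ^ n - 1) := by
        apply tsum_congr; intro j
        simp_rw [hrw]
        exact binom_id n hn _

end Aux2

section Aux3
open Real Set MeasureTheory

noncomputable def phi (s : ℝ) (n : ℕ) (x : ℝ) : ℝ := 1 - (max 0 (1 - x ^ (-s))) ^ n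

lemma phi_nonneg (s : ℝ) (n : ℕ) {x : ℝ} (hx : 0 < x) : 0 ≤ phi s n x := by
  unfold phi
  have h1 : max 0 (1 - x ^ (-s)) ≤ 1 := by
    apply max_le (by norm_num)
    have : 0 ≤ x ^ (-s) := Real.rpow_nonneg hx.le _
    linarith
  have h0 : 0 ≤ max 0 (1 - x ^ (-s)) := le_max_left _ _
  have := pow_le_one₀ h0 h1 (n := n)
  linarith

lemma phi_le_one (s : ℝ) (n : ℕ) (x : ℝ) : phi s n x ≤ 1 := by
  unfold phi
  have : 0 ≤ (max 0 (1 - x ^ (-s))) ^ n := pow_nonneg (le_max_left _ _) n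
  linarith

lemma phi_le (s : ℝ) (hs : 1 < s) (n : ℕ) {x : ℝ} (hx : 1 ≤ x) :
    phi s n x ≤ n * x ^ (-s) := by
  have hxs : x ^ (-s) ≤ 1 := Real.rpow_le_one_of_one_le_of_nonpos hx (by linarith)
  have hxs0 : 0 ≤ x ^ (-s) := Real.rpow_nonneg (by linarith) _
  unfold phi
  rw [max_eq_right (by linarith)]
  exact one_sub_pow_le n _ (by linarith)

lemma phi_eq (s : ℝ) (hs : 0 < s) (n : ℕ) {x : ℝ} (hx : 1 ≤ x) :
    phi s n x = 1 - (1 - x ^ (-s)) ^ n := by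
  have hxs : x ^ (-s) ≤ 1 := Real.rpow_le_one_of_one_le_of_nonpos hx (by linarith)
  unfold phi
  rw [max_eq_right (by linarith)]

lemma phi_antitoneOn (s : ℝ) (hs : 0 < s) (n : ℕ) : AntitoneOn (phi s n) (Ioi (0:ℝ)) := by
  intro x hx y hy hxy
  unfold phi
  have h1 : y ^ (-s) ≤ x ^ (-s) := Real.rpow_le_rpow_of_nonpos hx hxy (by linarith)
  have h2 : max 0 (1 - x ^ (-s)) ≤ max 0 (1 - y ^ (-s)) := by
    apply max_le_max le_rfl; linarith
  have := pow_le_pow_left₀ (le_max_left _ _) h2 n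
  linarith

lemma summable_u (s : ℝ) (hs : 1 < s) (n : ℕ) :
    Summable (fun j : ℕ => 1 - (1 - ((j : ℝ) + 1) ^ (-s)) ^ n) := by
  apply Summable.of_nonneg_of_le (f := fun j : ℕ => (n : ℝ) * ((j : ℝ) + 1) ^ (-s))
    (fun j => by
      rw [← phi_eq s (by linarith) n (x := (j:ℝ)+1) (le_add_of_nonneg_left (Nat.cast_nonneg j))]
      exact phi_nonneg s n (by positivity))
    (fun j => by
      rw [← phi_eq s (by linarith) n (x := (j:ℝ)+1) (le_add_of_nonneg_left (Nat.cast_nonneg j))]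
      exact phi_le s hs n (le_add_of_nonneg_left (Nat.cast_nonneg j)))
  exact ((summable_shift s hs).mul_left _)

end Aux3

section Aux4
open Real Set MeasureTheory

lemma phi_measurable (s : ℝ) (n : ℕ) : Measurable (phi s n) := by
  unfold phi
  fun_prop

lemma phi_integrableOn (s : ℝ) (hs : 1 < s) (n : ℕ) :
    IntegrableOn (phi s n) (Ioi (0:ℝ)) := by
  have h1 : IntegrableOn (phi s n) (Ioc (0:ℝ) 1) := by
    apply Integrable.mono' (g := fun _ => (1:ℝ))
    · exact integrableOn_const (by simp) (by simp)
    · exact (phi_measurable s n).aestronglyMeasurable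
    · filter_upwards [ae_restrict_mem measurableSet_Ioc] with x hx
      rw [Real.norm_eq_abs, abs_of_nonneg (phi_nonneg s n hx.1)]
      exact phi_le_one s n x
  have h2 : IntegrableOn (phi s n) (Ioi (1:ℝ)) := by
    apply Integrable.mono' (g := fun x => (n:ℝ) * x ^ (-s))
    · exact (integrableOn_Ioi_rpow_of_lt (by linarith) one_pos).const_mul _
    · exact (phi_measurable s n).aestronglyMeasurable
    · filter_upwards [ae_restrict_mem measurableSet_Ioi] with x hx
      rw [Real.norm_eq_abs, abs_of_nonneg (phi_nonneg s n (by linarith [mem_Ioi.1 hx]))]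
      exact phi_le s hs n (le_of_lt hx)
  simpa [Ioc_union_Ioi_eq_Ioi (zero_le_one : (0:ℝ) ≤ 1)] using h1.union h2

lemma summable_phi (s : ℝ) (hs : 1 < s) (n : ℕ) :
    Summable (fun j : ℕ => phi s n ((j : ℝ) + 1)) := by
  apply (summable_u s hs n).congr
  intro j
  rw [phi_eq s (by linarith) n (le_add_of_nonneg_left (Nat.cast_nonneg j))]

lemma integral_Ioi_one_le_tsum (s : ℝ) (hs : 1 < s) (n : ℕ) :
    ∫ x in Ioi (1:ℝ), phi s n x ≤ ∑' j : ℕ, phi s n ((j : ℝ) + 1) := by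
  have hint : IntegrableOn (phi s n) (Ioi (1:ℝ)) :=
    (phi_integrableOn s hs n).mono_set (Ioi_subset_Ioi zero_le_one)
  have key : Tendsto (fun N : ℕ => ∫ x in (1:ℝ)..(1 + N), phi s n x) atTop
      (𝓝 (∫ x in Ioi (1:ℝ), phi s n x)) := by
    apply intervalIntegral_tendsto_integral_Ioi 1 hint
    exact tendsto_atTop_add_const_left _ _ tendsto_natCast_atTop_atTop
  apply le_of_tendsto key
  filter_upwards with N
  calc ∫ x in (1:ℝ)..(1 + N), phi s n x
      ≤ ∑ i ∈ Finset.range N, phi s n (1 + i) := by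
        apply AntitoneOn.integral_le_sum
        apply (phi_antitoneOn s (by linarith) n).mono
        intro x hx
        exact lt_of_lt_of_le one_pos hx.1
    _ ≤ ∑' j : ℕ, phi s n ((j : ℝ) + 1) := by
        have := Summable.sum_le_tsum (Finset.range N)
          (fun j _ => phi_nonneg s n (by positivity)) (summable_phi s hs n)
        apply le_trans _ this
        apply le_of_eq
        apply Finset.sum_congr rfl
        intro i _
        rw [add_comm]

lemma tsum_le_integral (s : ℝ) (hs : 1 < s) (n : ℕ) (hn : 1 ≤ n) :
    ∑' j : ℕ, phi s n ((j : ℝ) + 1) ≤ 1 + ∫ x in Ioi (1:ℝ), phi s n x := by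
  have hint : IntegrableOn (phi s n) (Ioi (1:ℝ)) :=
    (phi_integrableOn s hs n).mono_set (Ioi_subset_Ioi zero_le_one)
  have h2 : ∑' j : ℕ, phi s n ((j : ℝ) + 1 + 1) ≤ ∫ x in Ioi (1:ℝ), phi s n x := by
    have key : Tendsto (fun N : ℕ => ∑ i ∈ Finset.range N, phi s n ((i : ℝ) + 1 + 1)) atTop
        (𝓝 (∑' j : ℕ, phi s n ((j : ℝ) + 1 + 1))) := by
      apply HasSum.tendsto_sum_nat
      apply Summable.hasSum
      apply ((summable_nat_add_iff 1).2 (summable_phi s hs n)).congr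
      intro j
      push_cast
      ring_nf
    apply le_of_tendsto key
    filter_upwards with N
    calc ∑ i ∈ Finset.range N, phi s n ((i : ℝ) + 1 + 1)
        = ∑ i ∈ Finset.range N, phi s n (1 + ((i : ℕ) + 1 : ℕ)) := by
          apply Finset.sum_congr rfl; intro i _; push_cast; ring_nf
      _ ≤ ∫ x in (1:ℝ)..(1 + N), phi s n x := by
          apply AntitoneOn.sum_le_integral
          apply (phi_antitoneOn s (by linarith) n).mono
          intro x hx
          exact lt_of_lt_of_le one_pos hx.1
      _ ≤ ∫ x in Ioi (1:ℝ), phi s n x := by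
          rw [intervalIntegral.integral_of_le (le_add_of_nonneg_right (Nat.cast_nonneg N))]
          apply setIntegral_mono_set hint
          · filter_upwards [ae_restrict_mem measurableSet_Ioi] with x hx
            exact phi_nonneg s n (by linarith [mem_Ioi.1 hx])
          · exact HasSubset.Subset.eventuallyLE Ioc_subset_Ioi_self
  have h1 : ∑' j : ℕ, phi s n ((j : ℝ) + 1) =
      phi s n 1 + ∑' j : ℕ, phi s n ((j : ℝ) + 1 + 1) := by
    rw [Summable.tsum_eq_zero_add (summable_phi s hs n)]
    push_cast
    norm_num
  have hphi1 : phi s n 1 ≤ 1 := phi_le_one s n 1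
  linarith

end Aux4

section Aux5
open Real Set MeasureTheory

lemma tsum_near_integral (s : ℝ) (hs : 1 < s) (n : ℕ) (hn : 1 ≤ n) :
    |(∑' j : ℕ, phi s n ((j : ℝ) + 1)) - ∫ x in Ioi (0:ℝ), phi s n x| ≤ 1 := by
  have hI := phi_integrableOn s hs n
  have hsplit : ∫ x in Ioi (0:ℝ), phi s n x =
      (∫ x in Ioc (0:ℝ) 1, phi s n x) + ∫ x in Ioi (1:ℝ), phi s n x := by
    rw [← setIntegral_union (Set.Ioc_disjoint_Ioi le_rfl) measurableSet_Ioi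
      (hI.mono_set Ioc_subset_Ioi_self) (hI.mono_set (Ioi_subset_Ioi zero_le_one))]
    rw [Ioc_union_Ioi_eq_Ioi (zero_le_one : (0:ℝ) ≤ 1)]
  have hC0 : 0 ≤ ∫ x in Ioc (0:ℝ) 1, phi s n x :=
    setIntegral_nonneg measurableSet_Ioc (fun x hx => phi_nonneg s n hx.1)
  have hC1 : ∫ x in Ioc (0:ℝ) 1, phi s n x ≤ 1 := by
    calc ∫ x in Ioc (0:ℝ) 1, phi s n x ≤ ∫ _ in Ioc (0:ℝ) 1, (1:ℝ) := by
          apply setIntegral_mono_on (hI.mono_set Ioc_subset_Ioi_self)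
            (integrableOn_const (by simp) (by simp)) measurableSet_Ioc
          intro x _; exact phi_le_one s n x
      _ = 1 := by simp
  have h1 := integral_Ioi_one_le_tsum s hs n
  have h2 := tsum_le_integral s hs n hn
  rw [abs_le]
  constructor <;> [linarith; linarith]

noncomputable def G (s : ℝ) (n : ℕ) (y : ℝ) : ℝ := 1 - (max 0 (1 - y ^ (-s) * (n:ℝ)⁻¹)) ^ n

lemma scaled_integral (s : ℝ) (hs : 1 < s) (n : ℕ) (hn : 1 ≤ n) :
    (n : ℝ) ^ (-(1/s)) * ∫ x in Ioi (0:ℝ), phi s n x = ∫ y in Ioi (0:ℝ), G s n y := by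
  have hn0 : (0:ℝ) < n := by exact_mod_cast hn
  have hb : (0:ℝ) < (n:ℝ) ^ (1/s) := rpow_pos_of_pos hn0 _
  have key := integral_comp_mul_left_Ioi (phi s n) 0 hb
  rw [mul_zero] at key
  have heq : ∀ y ∈ Ioi (0:ℝ), phi s n ((n:ℝ) ^ (1/s) * y) = G s n y := by
    intro y hy
    have hy0 : (0:ℝ) < y := hy
    unfold phi G
    congr 3
    have hpow : ((n:ℝ) ^ (1/s)) ^ (-s) = (n:ℝ)⁻¹ := by
      rw [← Real.rpow_mul hn0.le, show (1/s) * (-s) = -1 by field_simp, Real.rpow_neg_one]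
    rw [Real.mul_rpow hb.le hy0.le, hpow, mul_comm]
  rw [← setIntegral_congr_fun measurableSet_Ioi heq, key, smul_eq_mul]
  congr 1
  rw [← Real.rpow_neg_one ((n:ℝ) ^ (1/s)), ← Real.rpow_mul hn0.le]
  norm_num

end Aux5

section Aux6
open Real Set MeasureTheory

lemma G_nonneg (s : ℝ) (n : ℕ) {y : ℝ} (hy : 0 < y) : 0 ≤ G s n y := by
  unfold G
  have hc : 0 ≤ y ^ (-s) * (n:ℝ)⁻¹ := by positivity
  have h1 : max 0 (1 - y ^ (-s) * (n:ℝ)⁻¹) ≤ 1 := max_le (by norm_num) (by linarith)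
  have := pow_le_one₀ (le_max_left (0:ℝ) _) h1 (n := n)
  linarith

lemma G_le_one (s : ℝ) (n : ℕ) (y : ℝ) : G s n y ≤ 1 := by
  unfold G
  have : 0 ≤ (max 0 (1 - y ^ (-s) * (n:ℝ)⁻¹)) ^ n := pow_nonneg (le_max_left _ _) n
  linarith

lemma G_le (s : ℝ) (n : ℕ) {y : ℝ} (hy : 0 < y) : G s n y ≤ y ^ (-s) := by
  rcases Nat.eq_zero_or_pos n with rfl | hn
  · unfold G; simp [Real.rpow_nonneg hy.le]
  have hn0 : (0:ℝ) < n := by exact_mod_cast hn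
  set c : ℝ := y ^ (-s) * (n:ℝ)⁻¹ with hc
  have hc0 : 0 ≤ c := by positivity
  have hnc : (n:ℝ) * c = y ^ (-s) := by
    rw [hc]; field_simp
  rcases le_or_gt c 1 with h | h
  · unfold G
    rw [← hc, max_eq_right (by linarith), ← hnc]
    exact one_sub_pow_le n c (by linarith)
  · have : (1:ℝ) ≤ y ^ (-s) := by
      rw [← hnc]
      calc (1:ℝ) ≤ c := h.le
        _ = 1 * c := (one_mul c).symm
        _ ≤ (n:ℝ) * c := by apply mul_le_mul_of_nonneg_right _ hc0; exact_mod_cast hn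
    linarith [G_le_one s n y]

lemma G_measurable (s : ℝ) (n : ℕ) : Measurable (G s n) := by
  unfold G; fun_prop

lemma bound_integrable (s : ℝ) (hs : 1 < s) :
    IntegrableOn (fun y : ℝ => min 1 (y ^ (-s))) (Ioi (0:ℝ)) := by
  have hmeas : Measurable fun y : ℝ => min 1 (y ^ (-s)) := by fun_prop
  have h1 : IntegrableOn (fun y : ℝ => min 1 (y ^ (-s))) (Ioc (0:ℝ) 1) := by
    apply Integrable.mono' (g := fun _ => (1:ℝ))
    · exact integrableOn_const (by simp) (by simp)
    · exact hmeas.aestronglyMeasurable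
    · filter_upwards [ae_restrict_mem measurableSet_Ioc] with x hx
      rw [Real.norm_eq_abs, abs_of_nonneg (le_min zero_le_one (Real.rpow_nonneg hx.1.le _))]
      exact min_le_left _ _
  have h2 : IntegrableOn (fun y : ℝ => min 1 (y ^ (-s))) (Ioi (1:ℝ)) := by
    apply Integrable.mono' (g := fun x : ℝ => x ^ (-s))
    · exact integrableOn_Ioi_rpow_of_lt (by linarith) one_pos
    · exact hmeas.aestronglyMeasurable
    · filter_upwards [ae_restrict_mem measurableSet_Ioi] with x hx
      have hx0 : (0:ℝ) < x := lt_trans one_pos hx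
      rw [Real.norm_eq_abs, abs_of_nonneg (le_min zero_le_one (Real.rpow_nonneg hx0.le _))]
      exact min_le_right _ _
  simpa [Ioc_union_Ioi_eq_Ioi (zero_le_one : (0:ℝ) ≤ 1)] using h1.union h2

lemma G_tendsto (s : ℝ) (hs : 1 < s) :
    Tendsto (fun n : ℕ => ∫ y in Ioi (0:ℝ), G s n y) atTop
      (𝓝 (∫ y in Ioi (0:ℝ), (1 - Real.exp (-(y ^ (-s)))))) := by
  apply MeasureTheory.tendsto_integral_of_dominated_convergence
    (bound := fun y : ℝ => min 1 (y ^ (-s)))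
  · exact fun n => ((G_measurable s n).aestronglyMeasurable)
  · exact bound_integrable s hs
  · intro n
    filter_upwards [ae_restrict_mem measurableSet_Ioi] with y hy
    rw [Real.norm_eq_abs, abs_of_nonneg (G_nonneg s n hy)]
    exact le_min (G_le_one s n y) (G_le s n hy)
  · filter_upwards [ae_restrict_mem measurableSet_Ioi] with y hy
    have hy0 : (0:ℝ) < y := hy
    set a : ℝ := y ^ (-s) with ha
    have ha0 : 0 < a := Real.rpow_pos_of_pos hy0 _
    have hbase : Tendsto (fun n : ℕ => (1:ℝ) - (1 + (-a) / n) ^ n) atTop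
        (𝓝 (1 - Real.exp (-a))) :=
      tendsto_const_nhds.sub (Real.tendsto_one_add_div_pow_exp (-a))
    apply hbase.congr'
    filter_upwards [eventually_ge_atTop (max 1 ⌈a⌉₊)] with n hn
    have hn1 : 1 ≤ n := le_trans (le_max_left _ _) hn
    have hna : a ≤ (n:ℝ) := by
      have := le_trans (le_max_right _ _) hn
      calc a ≤ (⌈a⌉₊ : ℝ) := Nat.le_ceil a
        _ ≤ (n:ℝ) := by exact_mod_cast this
    have hn0 : (0:ℝ) < n := by exact_mod_cast hn1
    unfold G
    rw [← ha]
    congr 2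
    rw [max_eq_right]
    · ring
    · have : a * (n:ℝ)⁻¹ ≤ 1 := by
        rw [← div_eq_mul_inv, div_le_one hn0]; exact hna
      linarith

end Aux6

section Aux7
open Real Set MeasureTheory

lemma one_sub_exp_le_min (t : ℝ) (ht : 0 ≤ t) : 1 - Real.exp (-t) ≤ min 1 t := by
  apply le_min
  · have := Real.exp_pos (-t); linarith
  · have := Real.add_one_le_exp (-t); linarith

lemma mul_exp_le_min (t : ℝ) (ht : 0 ≤ t) : t * Real.exp (-t) ≤ min 1 t := by
  apply le_min
  · have h1 : t ≤ Real.exp t := by have := Real.add_one_le_exp t; linarith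
    calc t * Real.exp (-t) ≤ Real.exp t * Real.exp (-t) :=
          mul_le_mul_of_nonneg_right h1 (Real.exp_pos _).le
      _ = 1 := by rw [← Real.exp_add]; simp
  · calc t * Real.exp (-t) ≤ t * 1 :=
        mul_le_mul_of_nonneg_left (Real.exp_le_one_iff.2 (by linarith)) ht
      _ = t := mul_one t

lemma intA (s : ℝ) (hs : 1 < s) :
    IntegrableOn (fun y : ℝ => 1 - Real.exp (-(y ^ (-s)))) (Ioi (0:ℝ)) := by
  apply Integrable.mono' (bound_integrable s hs)
  · exact (by fun_prop : Measurable fun y : ℝ => 1 - Real.exp (-(y ^ (-s)))).aestronglyMeasurable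
  · filter_upwards [ae_restrict_mem measurableSet_Ioi] with y hy
    have hy0 : (0:ℝ) < y := hy
    have ht : 0 ≤ y ^ (-s) := Real.rpow_nonneg hy0.le _
    rw [Real.norm_eq_abs, abs_of_nonneg (by have := Real.exp_le_one_iff.2 (by linarith : -(y^(-s)) ≤ 0); linarith)]
    exact one_sub_exp_le_min _ ht

lemma intB (s : ℝ) (hs : 1 < s) :
    IntegrableOn (fun y : ℝ => y ^ (-s) * Real.exp (-(y ^ (-s)))) (Ioi (0:ℝ)) := by
  apply Integrable.mono' (bound_integrable s hs)
  · exact (by fun_prop : Measurable fun y : ℝ => y ^ (-s) * Real.exp (-(y ^ (-s)))).aestronglyMeasurable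
  · filter_upwards [ae_restrict_mem measurableSet_Ioi] with y hy
    have hy0 : (0:ℝ) < y := hy
    have ht : 0 ≤ y ^ (-s) := Real.rpow_nonneg hy0.le _
    rw [Real.norm_eq_abs, abs_of_nonneg (by positivity)]
    exact mul_exp_le_min _ ht

lemma B_value (s : ℝ) (hs : 1 < s) :
    ∫ y in Ioi (0:ℝ), y ^ (-s) * Real.exp (-(y ^ (-s))) = (1/s) * Real.Gamma (1 - 1/s) := by
  have hs0 : (0:ℝ) < s := by linarith
  have key := MeasureTheory.integral_comp_rpow_Ioi
    (fun y : ℝ => y ^ (-s) * Real.exp (-(y ^ (-s)))) (p := -1) (by norm_num)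
  rw [← key]
  have heq : ∀ x ∈ Ioi (0:ℝ), (|(-1:ℝ)| * x ^ ((-1:ℝ) - 1)) •
      ((x ^ (-1:ℝ)) ^ (-s) * Real.exp (-((x ^ (-1:ℝ)) ^ (-s)))) =
      x ^ (s - 2) * Real.exp (-(x ^ s)) := by
    intro x hx
    have hx0 : (0:ℝ) < x := hx
    have h1 : (x ^ (-1:ℝ)) ^ (-s) = x ^ s := by
      rw [← Real.rpow_mul hx0.le]; norm_num
    rw [h1, smul_eq_mul, abs_neg, abs_one, one_mul,
      show (-1:ℝ) - 1 = -2 by norm_num, ← mul_assoc, ← Real.rpow_add hx0,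
      show (-2:ℝ) + s = s - 2 by ring]
  rw [setIntegral_congr_fun measurableSet_Ioi heq]
  have := integral_rpow_mul_exp_neg_rpow (p := s) (q := s - 2) hs0 (by linarith)
  rw [show (s - 2 + 1) / s = 1 - 1/s by field_simp; ring] at this
  exact this

end Aux7

section Aux8
open Real Set MeasureTheory

lemma deriv_f (s : ℝ) (hs : 1 < s) {y : ℝ} (hy : 0 < y) :
    HasDerivAt (fun y : ℝ => y * (1 - Real.exp (-(y ^ (-s)))))
      ((1 - Real.exp (-(y ^ (-s)))) - s * (y ^ (-s) * Real.exp (-(y ^ (-s))))) y := by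
  have h1 : HasDerivAt (fun y : ℝ => y ^ (-s)) ((-s) * y ^ (-s - 1)) y :=
    Real.hasDerivAt_rpow_const (Or.inl hy.ne')
  have h2 : HasDerivAt (fun y : ℝ => Real.exp (-(y ^ (-s))))
      (Real.exp (-(y ^ (-s))) * (s * y ^ (-s - 1))) y := by
    have := (h1.neg).exp
    convert this using 1
    · rfl
    simp only [Pi.neg_apply]
    ring
  have h3 : HasDerivAt (fun y : ℝ => 1 - Real.exp (-(y ^ (-s))))
      (-(Real.exp (-(y ^ (-s))) * (s * y ^ (-s - 1)))) y := (h2.const_sub 1)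
  have h4 := (hasDerivAt_id y).mul h3
  convert h4 using 1
  · rfl
  · rfl
  · rfl
  have hy1 : y * y ^ (-s - 1) = y ^ (-s) := by
    nth_rewrite 1 [← Real.rpow_one y]
    rw [← Real.rpow_add hy]
    norm_num
  simp only [id_eq, one_mul]
  linear_combination (s * Real.exp (-(y ^ (-s)))) * hy1

lemma f_tendsto_zero (s : ℝ) (hs : 1 < s) :
    Tendsto (fun y : ℝ => y * (1 - Real.exp (-(y ^ (-s))))) atTop (𝓝 0) := by
  apply tendsto_of_tendsto_of_tendsto_of_le_of_le' tendsto_const_nhds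
    (tendsto_rpow_neg_atTop (by linarith : (0:ℝ) < s - 1))
  · filter_upwards [eventually_gt_atTop (0:ℝ)] with y hy
    have ht : 0 ≤ y ^ (-s) := Real.rpow_nonneg hy.le _
    have : Real.exp (-(y ^ (-s))) ≤ 1 := Real.exp_le_one_iff.2 (by linarith)
    exact mul_nonneg hy.le (by linarith)
  · filter_upwards [eventually_gt_atTop (0:ℝ)] with y hy
    have ht : 0 ≤ y ^ (-s) := Real.rpow_nonneg hy.le _
    have h1 : 1 - Real.exp (-(y ^ (-s))) ≤ y ^ (-s) := by
      have := Real.add_one_le_exp (-(y ^ (-s))); linarith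
    calc y * (1 - Real.exp (-(y ^ (-s)))) ≤ y * y ^ (-s) :=
          mul_le_mul_of_nonneg_left h1 hy.le
      _ = y ^ (-(s-1)) := by
          nth_rewrite 1 [← Real.rpow_one y]
          rw [← Real.rpow_add hy]
          congr 1
          ring

lemma eps_identity (s : ℝ) (hs : 1 < s) {ε : ℝ} (hε : 0 < ε) :
    (∫ y in Ioi ε, (1 - Real.exp (-(y ^ (-s))))) -
      s * ∫ y in Ioi ε, y ^ (-s) * Real.exp (-(y ^ (-s))) =
      -(ε * (1 - Real.exp (-(ε ^ (-s))))) := by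
  have hsub : Ioi ε ⊆ Ioi (0:ℝ) := Ioi_subset_Ioi hε.le
  have hA := (intA s hs).mono_set hsub
  have hB := (intB s hs).mono_set hsub
  have key := integral_Ioi_of_hasDerivAt_of_tendsto
    (f := fun y : ℝ => y * (1 - Real.exp (-(y ^ (-s)))))
    (f' := fun y : ℝ => (1 - Real.exp (-(y ^ (-s)))) - s * (y ^ (-s) * Real.exp (-(y ^ (-s)))))
    (a := ε)
    ((deriv_f s hs hε).continuousAt.continuousWithinAt)
    (fun x hx => deriv_f s hs (lt_trans hε hx))
    (by
      apply Integrable.sub hA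
      exact hB.const_mul s)
    (f_tendsto_zero s hs)
  rw [integral_sub hA (hB.const_mul s), MeasureTheory.integral_const_mul] at key
  rw [key]
  ring

lemma A_value (s : ℝ) (hs : 1 < s) :
    ∫ y in Ioi (0:ℝ), (1 - Real.exp (-(y ^ (-s)))) = Real.Gamma (1 - 1/s) := by
  set A := ∫ y in Ioi (0:ℝ), (1 - Real.exp (-(y ^ (-s)))) with hA
  set B := ∫ y in Ioi (0:ℝ), y ^ (-s) * Real.exp (-(y ^ (-s))) with hB
  have key : A = s * B := by
    have hbound : ∀ ε : ℝ, 0 < ε → |A - s * B| ≤ (2 + s) * ε := by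
      intro ε hε
      have hsplitA : A = (∫ y in Ioc (0:ℝ) ε, (1 - Real.exp (-(y ^ (-s))))) +
          ∫ y in Ioi ε, (1 - Real.exp (-(y ^ (-s)))) := by
        rw [← setIntegral_union (Set.Ioc_disjoint_Ioi le_rfl) measurableSet_Ioi
          ((intA s hs).mono_set Ioc_subset_Ioi_self)
          ((intA s hs).mono_set (Ioi_subset_Ioi hε.le)), Ioc_union_Ioi_eq_Ioi hε.le]
      have hsplitB : B = (∫ y in Ioc (0:ℝ) ε, y ^ (-s) * Real.exp (-(y ^ (-s)))) +
          ∫ y in Ioi ε, y ^ (-s) * Real.exp (-(y ^ (-s))) := by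
        rw [← setIntegral_union (Set.Ioc_disjoint_Ioi le_rfl) measurableSet_Ioi
          ((intB s hs).mono_set Ioc_subset_Ioi_self)
          ((intB s hs).mono_set (Ioi_subset_Ioi hε.le)), Ioc_union_Ioi_eq_Ioi hε.le]
      have hid := eps_identity s hs hε
      have hvol : (volume (Ioc (0:ℝ) ε)).toReal = ε := by
        rw [Real.volume_Ioc, sub_zero, ENNReal.toReal_ofReal hε.le]
      have hboundA : ‖∫ y in Ioc (0:ℝ) ε, (1 - Real.exp (-(y ^ (-s))))‖ ≤ 1 * ε := by
        rw [show (1:ℝ) * ε = 1 * (volume (Ioc (0:ℝ) ε)).toReal by rw [hvol]]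
        apply norm_setIntegral_le_of_norm_le_const
        · rw [Real.volume_Ioc]; exact ENNReal.ofReal_lt_top
        · intro y hy
          have ht : 0 ≤ y ^ (-s) := Real.rpow_nonneg hy.1.le _
          have h1 : Real.exp (-(y ^ (-s))) ≤ 1 := Real.exp_le_one_iff.2 (by linarith)
          have h2 := (Real.exp_pos (-(y ^ (-s)))).le
          rw [Real.norm_eq_abs, abs_of_nonneg (by linarith)]
          linarith
      have hboundB : ‖∫ y in Ioc (0:ℝ) ε, y ^ (-s) * Real.exp (-(y ^ (-s)))‖ ≤ 1 * ε := by
        rw [show (1:ℝ) * ε = 1 * (volume (Ioc (0:ℝ) ε)).toReal by rw [hvol]]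
        apply norm_setIntegral_le_of_norm_le_const
        · rw [Real.volume_Ioc]; exact ENNReal.ofReal_lt_top
        · intro y hy
          have ht : 0 ≤ y ^ (-s) := Real.rpow_nonneg hy.1.le _
          rw [Real.norm_eq_abs, abs_of_nonneg (by positivity)]
          exact le_trans (mul_exp_le_min _ ht) (min_le_left _ _)
      have hboundg : |ε * (1 - Real.exp (-(ε ^ (-s))))| ≤ ε := by
        have ht : 0 ≤ ε ^ (-s) := Real.rpow_nonneg hε.le _
        have h1 : Real.exp (-(ε ^ (-s))) ≤ 1 := Real.exp_le_one_iff.2 (by linarith)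
        have h2 := (Real.exp_pos (-(ε ^ (-s)))).le
        rw [abs_of_nonneg (by nlinarith)]
        nlinarith
      rw [Real.norm_eq_abs] at hboundA hboundB
      have hs0 : (0:ℝ) < s := by linarith
      have : A - s * B = (∫ y in Ioc (0:ℝ) ε, (1 - Real.exp (-(y ^ (-s))))) -
          s * (∫ y in Ioc (0:ℝ) ε, y ^ (-s) * Real.exp (-(y ^ (-s)))) -
          ε * (1 - Real.exp (-(ε ^ (-s)))) := by
        rw [hsplitA, hsplitB] at *
        linarith [hid]
      rw [this]
      have habs1 := abs_sub (((∫ y in Ioc (0:ℝ) ε, (1 - Real.exp (-(y ^ (-s)))))) -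
          s * (∫ y in Ioc (0:ℝ) ε, y ^ (-s) * Real.exp (-(y ^ (-s)))))
          (ε * (1 - Real.exp (-(ε ^ (-s)))))
      calc |(∫ y in Ioc (0:ℝ) ε, (1 - Real.exp (-(y ^ (-s))))) -
          s * (∫ y in Ioc (0:ℝ) ε, y ^ (-s) * Real.exp (-(y ^ (-s)))) -
          ε * (1 - Real.exp (-(ε ^ (-s))))|
          ≤ |(∫ y in Ioc (0:ℝ) ε, (1 - Real.exp (-(y ^ (-s))))) -
            s * (∫ y in Ioc (0:ℝ) ε, y ^ (-s) * Real.exp (-(y ^ (-s))))| +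
            |ε * (1 - Real.exp (-(ε ^ (-s))))| := abs_sub _ _
        _ ≤ |(∫ y in Ioc (0:ℝ) ε, (1 - Real.exp (-(y ^ (-s)))))| +
            |s * (∫ y in Ioc (0:ℝ) ε, y ^ (-s) * Real.exp (-(y ^ (-s))))| +
            |ε * (1 - Real.exp (-(ε ^ (-s))))| := by
              have := abs_sub ((∫ y in Ioc (0:ℝ) ε, (1 - Real.exp (-(y ^ (-s))))))
                (s * (∫ y in Ioc (0:ℝ) ε, y ^ (-s) * Real.exp (-(y ^ (-s)))))
              linarith
        _ ≤ (2 + s) * ε := by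
            rw [abs_mul, abs_of_nonneg hs0.le]
            have := mul_le_mul_of_nonneg_left hboundB hs0.le
            nlinarith
    rcases eq_or_lt_of_le (abs_nonneg (A - s * B)) with h | h
    · have := h.symm
      rw [abs_eq_zero] at this
      linarith
    · exfalso
      have h2s : (0:ℝ) < 2 + s := by linarith
      have hb2 := hbound (|A - s * B| / (2 * (2 + s))) (by positivity)
      have key2 : (2 + s) * (|A - s * B| / (2 * (2 + s))) = |A - s * B| / 2 := by
        field_simp
      rw [key2] at hb2
      linarith
  rw [key, hB, B_value s hs]
  field_simp

end Aux8

section Main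
open Real Set MeasureTheory

lemma core_limit (s : ℝ) (hs : 1 < s) :
    Tendsto (fun n : ℕ => (n : ℝ) ^ (-(1/s)) * ∑' j : ℕ, phi s n ((j : ℝ) + 1)) atTop
      (𝓝 (Real.Gamma (1 - 1/s))) := by
  have hrpow0 : Tendsto (fun n : ℕ => (n : ℝ) ^ (-(1/s))) atTop (𝓝 0) :=
    (tendsto_rpow_neg_atTop (by positivity : (0:ℝ) < 1/s)).comp tendsto_natCast_atTop_atTop
  have h1 : Tendsto (fun n : ℕ => (n : ℝ) ^ (-(1/s)) * ∫ x in Ioi (0:ℝ), phi s n x) atTop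
      (𝓝 (Real.Gamma (1 - 1/s))) := by
    rw [← A_value s hs]
    apply (G_tendsto s hs).congr'
    filter_upwards [eventually_ge_atTop 1] with n hn
    exact (scaled_integral s hs n hn).symm
  have h2 : Tendsto (fun n : ℕ => (n : ℝ) ^ (-(1/s)) *
      ((∑' j : ℕ, phi s n ((j : ℝ) + 1)) - ∫ x in Ioi (0:ℝ), phi s n x)) atTop (𝓝 0) := by
    apply squeeze_zero_norm' _ hrpow0
    filter_upwards [eventually_ge_atTop 1] with n hn
    have hn0 : (0:ℝ) ≤ (n:ℝ) ^ (-(1/s)) := Real.rpow_nonneg (Nat.cast_nonneg n) _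
    rw [Real.norm_eq_abs, abs_mul, abs_of_nonneg hn0]
    calc (n:ℝ) ^ (-(1/s)) * |(∑' j : ℕ, phi s n ((j : ℝ) + 1)) - ∫ x in Ioi (0:ℝ), phi s n x|
        ≤ (n:ℝ) ^ (-(1/s)) * 1 :=
          mul_le_mul_of_nonneg_left (tsum_near_integral s hs n hn) hn0
      _ = (n:ℝ) ^ (-(1/s)) := mul_one _
  have := h1.add h2
  rw [add_zero] at this
  apply this.congr
  intro n
  ring

theorem stmt_16' (s : ℝ) (hs : 1 < s) :
    Tendsto (fun n : ℕ => (n : ℝ) ^ (-(1 / s)) *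
        ∑ k ∈ Finset.Icc 1 n, (-1 : ℝ) ^ k * (n.choose k : ℝ)
          * ∑' j : ℕ, ((j : ℝ) + 1) ^ (-(s * k)))
      atTop (𝓝 (-Real.Gamma (1 - 1 / s))) := by
  have hcore := (core_limit s hs).neg
  apply hcore.congr'
  filter_upwards [eventually_ge_atTop 1] with n hn
  rw [sum_eq s hs n hn]
  have htsum : ∑' j : ℕ, ((1 - ((j : ℝ) + 1) ^ (-s)) ^ n - 1) =
      -∑' j : ℕ, phi s n ((j : ℝ) + 1) := by
    rw [← tsum_neg]
    apply tsum_congr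
    intro j
    rw [phi_eq s (by linarith) n (le_add_of_nonneg_left (Nat.cast_nonneg j))]
    ring
  rw [htsum]
  ring

end Main


/-- With `ζ` the Riemann zeta function
(`ζ(x) = ∑_{j≥1} j^{-x}` for real `x > 1`), `Γ` the Gamma function and `s > 1`
a real number, `n^(-1/s) ∑_{k=1}^n (-1)^k C(n,k) ζ(s k) → -Γ(1 - 1/s)` as
`n → ∞`. -/
theorem stmt_16 (s : ℝ) (hs : 1 < s) :
    Tendsto (fun n : ℕ => (n : ℝ) ^ (-(1 / s)) *
        ∑ k ∈ Icc 1 n, (-1 : ℝ) ^ k * (n.choose k : ℝ)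
          * ∑' j : ℕ, ((j : ℝ) + 1) ^ (-(s * k)))
      atTop (𝓝 (-Real.Gamma (1 - 1 / s))) := by
  exact stmt_16' s hs
end

section
/- For n ≥ 1 define D_n = lim_{N→∞} [∑_{j=1}^N (1 − 1/j)^n − ∫_1^N (1 − 1/x)^n dx]. Then this limit exists for every n, and n (D_n − 1/2) → 0 as n → ∞; that is, D_n = 1/2 + o(1/n). -/
open MeasureTheory Filter Finset
open scoped Topology

namespace S18

noncomputable def f (n : ℕ) (x : ℝ) : ℝ := (1 - 1/x)^n

noncomputable def seq (n : ℕ) (N : ℕ) : ℝ :=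
  (∑ j ∈ Icc 1 N, (1 - 1 / (j : ℝ)) ^ n) - ∫ x in Set.Icc (1 : ℝ) (N : ℝ), (1 - 1 / x) ^ n

lemma f_contOn (n : ℕ) {a b : ℝ} (ha : 1 ≤ a) (hb : 1 ≤ b) :
    ContinuousOn (f n) (Set.uIcc a b) := by
  apply ContinuousOn.pow
  apply ContinuousOn.sub continuousOn_const
  apply ContinuousOn.div continuousOn_const (continuousOn_id' _)
  intro x hx
  rcases Set.mem_uIcc.1 hx with h | h <;> nlinarith [h.1, h.2]

lemma f_intble (n : ℕ) {a b : ℝ} (ha : 1 ≤ a) (hb : 1 ≤ b) :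
    IntervalIntegrable (f n) volume a b :=
  (f_contOn n ha hb).intervalIntegrable

lemma f_nonneg (n : ℕ) {x : ℝ} (hx : 1 ≤ x) : 0 ≤ f n x := by
  apply pow_nonneg; rw [sub_nonneg, div_le_one (by linarith)]; linarith

lemma f_le_one (n : ℕ) {x : ℝ} (hx : 1 ≤ x) : f n x ≤ 1 := by
  apply pow_le_one₀
  · rw [sub_nonneg, div_le_one (by linarith)]; linarith
  · have : 0 < 1/x := by positivity
    linarith

lemma f_mono (n : ℕ) {a b : ℝ} (ha : 1 ≤ a) (hab : a ≤ b) : f n a ≤ f n b := by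
  apply pow_le_pow_left₀
  · rw [sub_nonneg, div_le_one (by linarith)]; linarith
  · have h1 : (0:ℝ) < a := by linarith
    have : 1/b ≤ 1/a := by apply one_div_le_one_div_of_le h1 hab
    linarith

lemma setInt (n : ℕ) {N : ℝ} (h : 1 ≤ N) :
    ∫ x in Set.Icc (1:ℝ) N, (1 - 1/x)^n = ∫ x in (1:ℝ)..N, f n x := by
  rw [MeasureTheory.integral_Icc_eq_integral_Ioc, intervalIntegral.integral_of_le h]
  rfl

lemma seq_zero (n : ℕ) : seq n 0 = 0 := by
  unfold seq
  rw [show Set.Icc (1:ℝ) ((0:ℕ):ℝ) = ∅ by rw [Set.Icc_eq_empty_iff]; norm_num]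
  simp

lemma seq_one (n : ℕ) : seq n 1 = f n 1 := by
  unfold seq
  rw [show ((1:ℕ):ℝ) = (1:ℝ) by norm_num, Set.Icc_self]
  simp [f]

lemma seq_succ (n : ℕ) {N : ℕ} (h : 1 ≤ N) :
    seq n (N+1) = seq n N + f n ((N:ℝ)+1) - ∫ x in (N:ℝ)..((N:ℝ)+1), f n x := by
  have h1 : (1:ℝ) ≤ (N:ℝ) := by exact_mod_cast h
  unfold seq
  rw [setInt n h1, show (((N:ℕ)+1:ℕ):ℝ) = (N:ℝ)+1 by push_cast; ring,
    setInt n (by linarith), Finset.sum_Icc_succ_top (by omega)]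
  rw [← intervalIntegral.integral_add_adjacent_intervals (μ := volume) (c := (N:ℝ)+1)
    (f_intble n le_rfl h1) (f_intble n h1 (by linarith))]
  have : ((1:ℝ) - 1/((N+1:ℕ):ℝ))^n = f n ((N:ℝ)+1) := by push_cast; rfl
  rw [this]; ring

lemma int_ge (n : ℕ) {N : ℕ} (h : 1 ≤ N) :
    f n N ≤ ∫ x in (N:ℝ)..((N:ℝ)+1), f n x := by
  have h1 : (1:ℝ) ≤ (N:ℝ) := by exact_mod_cast h
  have := intervalIntegral.integral_mono_on (μ := volume) (f := fun _ => f n N)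
    (g := f n) (a := (N:ℝ)) (b := (N:ℝ)+1) (by linarith)
    (intervalIntegrable_const) (f_intble n h1 (by linarith))
    (fun x hx => f_mono n h1 hx.1)
  simpa using this

lemma int_le (n : ℕ) {N : ℕ} (h : 1 ≤ N) :
    (∫ x in (N:ℝ)..((N:ℝ)+1), f n x) ≤ f n ((N:ℝ)+1) := by
  have h1 : (1:ℝ) ≤ (N:ℝ) := by exact_mod_cast h
  have := intervalIntegral.integral_mono_on (μ := volume) (g := fun _ => f n ((N:ℝ)+1))
    (f := f n) (a := (N:ℝ)) (b := (N:ℝ)+1) (by linarith)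
    (f_intble n h1 (by linarith)) (intervalIntegrable_const)
    (fun x hx => f_mono n (by linarith [hx.1]) hx.2)
  simpa using this

lemma seq_mono (n : ℕ) : Monotone (seq n) := by
  apply monotone_nat_of_le_succ
  intro N
  rcases Nat.eq_zero_or_pos N with rfl | h
  · rw [seq_zero, seq_one]
    exact f_nonneg n le_rfl
  · rw [seq_succ n h]
    have := int_le n h
    linarith

lemma seq_le (n : ℕ) {N : ℕ} (h : 1 ≤ N) : seq n N ≤ f n N := by
  induction N with
  | zero => omega
  | succ M ih =>
    rcases Nat.eq_zero_or_pos M with rfl | hM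
    · rw [seq_one]; push_cast; exact le_rfl
    · rw [seq_succ n hM]
      have h2 := int_ge n hM
      have h3 := ih hM
      push_cast
      linarith

lemma seq_bdd (n : ℕ) : BddAbove (Set.range (seq n)) := by
  refine ⟨1, ?_⟩
  rintro x ⟨N, rfl⟩
  rcases Nat.eq_zero_or_pos N with rfl | h
  · rw [seq_zero]; norm_num
  · refine (seq_le n h).trans (f_le_one n ?_)
    exact_mod_cast h

lemma part1 (n : ℕ) : Tendsto (seq n) atTop (𝓝 (⨆ N, seq n N)) :=
  tendsto_atTop_ciSup (seq_mono n) (seq_bdd n)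



noncomputable def f1 (m : ℕ) (x : ℝ) : ℝ := ((m:ℝ)+3) * (1-1/x)^(m+2) * (1/x)^2

noncomputable def f2 (m : ℕ) (x : ℝ) : ℝ :=
  ((m:ℝ)+3)*((m:ℝ)+2)*(1-1/x)^(m+1)*(1/x)^4 - 2*((m:ℝ)+3)*(1-1/x)^(m+2)*(1/x)^3

noncomputable def f3 (m : ℕ) (x : ℝ) : ℝ :=
  ((m:ℝ)+3)*((m:ℝ)+2)*((m:ℝ)+1)*(1-1/x)^m*(1/x)^6
    - 6*((m:ℝ)+3)*((m:ℝ)+2)*(1-1/x)^(m+1)*(1/x)^5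
    + 6*((m:ℝ)+3)*(1-1/x)^(m+2)*(1/x)^4

lemma hasDerivAt_inv' {x : ℝ} (hx : x ≠ 0) :
    HasDerivAt (fun y : ℝ => 1/y) (-(1/x)^2) x := by
  simpa only [one_div] using (hasDerivAt_inv hx).congr_deriv (by rw [inv_pow])

lemma hasDerivAt_u {x : ℝ} (hx : x ≠ 0) :
    HasDerivAt (fun y : ℝ => 1 - 1/y) ((1/x)^2) x := by
  exact ((hasDerivAt_const x (1:ℝ)).sub (hasDerivAt_inv' hx)).congr_deriv (by ring)

lemma hasDerivAt_upow (k : ℕ) {x : ℝ} (hx : x ≠ 0) :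
    HasDerivAt (fun y : ℝ => (1 - 1/y)^(k+1)) (((k:ℝ)+1) * (1-1/x)^k * (1/x)^2) x := by
  have := (hasDerivAt_u hx).pow (k+1)
  exact this.congr_deriv (by rw [Nat.add_sub_cancel]; push_cast; ring)

lemma hasDerivAt_vpow (k : ℕ) {x : ℝ} (hx : x ≠ 0) :
    HasDerivAt (fun y : ℝ => (1/y)^(k+1)) (-(((k:ℝ)+1) * (1/x)^k * (1/x)^2)) x := by
  have := (hasDerivAt_inv' hx).pow (k+1)
  refine this.congr_deriv ?_
  push_cast; ring

lemma hasDerivAt_f {m : ℕ} {x : ℝ} (hx : x ≠ 0) :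
    HasDerivAt (f (m+3)) (f1 m x) x := by
  have := hasDerivAt_upow (m+2) hx
  unfold f f1
  convert this using 2
  all_goals push_cast; ring

lemma hasDerivAt_f1 {m : ℕ} {x : ℝ} (hx : x ≠ 0) :
    HasDerivAt (f1 m) (f2 m x) x := by
  have h := ((hasDerivAt_upow (m+1) hx).const_mul ((m:ℝ)+3)).mul (hasDerivAt_vpow 1 hx)
  unfold f1 f2
  refine h.congr_deriv ?_
  push_cast; ring

lemma hasDerivAt_f2 {m : ℕ} {x : ℝ} (hx : x ≠ 0) :
    HasDerivAt (f2 m) (f3 m x) x := by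
  have h1 := ((hasDerivAt_upow m hx).const_mul (((m:ℝ)+3)*((m:ℝ)+2))).mul
    (hasDerivAt_vpow 3 hx)
  have h2 := ((hasDerivAt_upow (m+1) hx).const_mul (2*((m:ℝ)+3))).mul
    (hasDerivAt_vpow 2 hx)
  have h := h1.sub h2
  unfold f2 f3
  refine h.congr_deriv ?_
  all_goals push_cast; ring

-- kernel
noncomputable def r (s : ℝ) : ℝ := (2*s^3 - 3*s^2 + s)/12
noncomputable def r1 (s : ℝ) : ℝ := (6*s^2 - 6*s + 1)/12
noncomputable def r2 (s : ℝ) : ℝ := s - 1/2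

lemma hasDerivAt_r (s : ℝ) : HasDerivAt r (r1 s) s := by
  unfold r r1
  have h3 := hasDerivAt_pow 3 s
  have h2 := hasDerivAt_pow 2 s
  have h1 := hasDerivAt_id s
  have := (((h3.const_mul (2:ℝ)).sub (h2.const_mul (3:ℝ))).add h1).div_const 12
  refine this.congr_deriv ?_
  norm_num; ring

lemma hasDerivAt_r1 (s : ℝ) : HasDerivAt r1 (r2 s) s := by
  unfold r1 r2
  have h2 := hasDerivAt_pow 2 s
  have h1 := hasDerivAt_id s
  have := (((h2.const_mul (6:ℝ)).sub (h1.const_mul (6:ℝ))).add_const 1).div_const 12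
  refine this.congr_deriv ?_
  norm_num; ring

lemma hasDerivAt_rs (a s : ℝ) : HasDerivAt (fun t => r (t - a)) (r1 (s - a)) s := by
  have := (hasDerivAt_r (s-a)).comp s ((hasDerivAt_id s).sub_const a)
  exact this.congr_deriv (by simp)

lemma hasDerivAt_r1s (a s : ℝ) : HasDerivAt (fun t => r1 (t - a)) (r2 (s - a)) s := by
  have := (hasDerivAt_r1 (s-a)).comp s ((hasDerivAt_id s).sub_const a)
  exact this.congr_deriv (by simp)

lemma hasDerivAt_r2s (a s : ℝ) : HasDerivAt (fun t => r2 (t - a)) 1 s := by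
  unfold r2
  have := ((hasDerivAt_id s).sub_const a).sub_const (1/2:ℝ)
  simpa using this

lemma r_abs_le {s : ℝ} (h0 : 0 ≤ s) (h1 : s ≤ 1) : |r s| ≤ 1/48 := by
  rw [abs_le]
  unfold r
  constructor <;> nlinarith [sq_nonneg (2*s-1), sq_nonneg (s*(1-s)), mul_nonneg h0 (sub_nonneg.2 h1), sq_nonneg s, sq_nonneg (1-s), mul_nonneg (mul_nonneg h0 h0) (sub_nonneg.2 h1)]

lemma r_zero : r 0 = 0 := by unfold r; norm_num
lemma r_one : r 1 = 0 := by unfold r; norm_num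
lemma r1_zero : r1 0 = 1/12 := by unfold r1; norm_num
lemma r1_one : r1 1 = 1/12 := by unfold r1; norm_num
lemma r2_zero : r2 0 = -(1/2) := by unfold r2; norm_num
lemma r2_one : r2 1 = 1/2 := by unfold r2; norm_num


noncomputable def H (m : ℕ) (a t : ℝ) : ℝ :=
  r (t-a) * f2 m t - r1 (t-a) * f1 m t + r2 (t-a) * f (m+3) t

lemma hasDerivAt_H (m : ℕ) (a : ℝ) {t : ℝ} (ht : t ≠ 0) :
    HasDerivAt (H m a) (r (t-a) * f3 m t + f (m+3) t) t := by
  have h1 := (hasDerivAt_rs a t).mul (hasDerivAt_f2 (m:=m) ht)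
  have h2 := (hasDerivAt_r1s a t).mul (hasDerivAt_f1 (m:=m) ht)
  have h3 := (hasDerivAt_r2s a t).mul (hasDerivAt_f (m:=m) ht)
  have h := (h1.sub h2).add h3
  unfold H
  refine h.congr_deriv ?_
  have : r2 (t-a) = r1 (t-a) + (r2 (t-a) - r1 (t-a)) := by ring
  ring

-- continuity
lemma contOn_aux (k : ℕ) (c : ℝ) {s : Set ℝ} (hs : ∀ x ∈ s, x ≠ 0) :
    ContinuousOn (fun x : ℝ => c * (1-1/x)^k * (1/x)^(k+1)) s := by
  apply ContinuousOn.mul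
  apply ContinuousOn.mul continuousOn_const
  · exact (ContinuousOn.sub continuousOn_const
      ((continuousOn_const).div (continuousOn_id' _) hs)).pow k
  · exact ((continuousOn_const).div (continuousOn_id' _) hs).pow (k+1)

lemma contOn_f3 (m : ℕ) {s : Set ℝ} (hs : ∀ x ∈ s, x ≠ 0) :
    ContinuousOn (f3 m) s := by
  unfold f3
  have hv : ContinuousOn (fun x:ℝ => 1/x) s :=
    (continuousOn_const).div (continuousOn_id' _) hs
  have hu : ContinuousOn (fun x:ℝ => 1-1/x) s := continuousOn_const.sub hv
  exact (((continuousOn_const.mul (hu.pow m)).mul (hv.pow 6)).sub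
    ((continuousOn_const.mul (hu.pow (m+1))).mul (hv.pow 5))).add
    ((continuousOn_const.mul (hu.pow (m+2))).mul (hv.pow 4))

lemma ne_zero_of_uIcc {a : ℝ} (ha : 1 ≤ a) {x : ℝ} (hx : x ∈ Set.uIcc a (a+1)) :
    x ≠ 0 := by
  rw [Set.uIcc_of_le (by linarith)] at hx
  have := hx.1; intro h; rw [h] at this; linarith

lemma contOn_rf3 (m : ℕ) {a : ℝ} (ha : 1 ≤ a) :
    ContinuousOn (fun t => r (t-a) * f3 m t) (Set.uIcc a (a+1)) := by
  apply ContinuousOn.mul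
  · apply Continuous.continuousOn
    unfold r
    fun_prop
  · exact contOn_f3 m (fun x hx => ne_zero_of_uIcc ha hx)

noncomputable def Rj (m : ℕ) (a : ℝ) : ℝ := ∫ t in a..(a+1), r (t-a) * f3 m t

lemma contOn_f (n : ℕ) {s : Set ℝ} (hs : ∀ x ∈ s, x ≠ 0) :
    ContinuousOn (f n) s :=
  (continuousOn_const.sub ((continuousOn_const).div (continuousOn_id' _) hs)).pow n

lemma key_integral (m : ℕ) {a : ℝ} (ha : 1 ≤ a) :
    ∫ t in a..(a+1), f (m+3) t
      = f (m+3) (a+1)/2 + f (m+3) a/2 - f1 m (a+1)/12 + f1 m a/12 - Rj m a := by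
  have hne : ∀ x ∈ Set.uIcc a (a+1), x ≠ 0 := fun x hx => ne_zero_of_uIcc ha hx
  have hint1 : IntervalIntegrable (fun t => r (t-a) * f3 m t) volume a (a+1) :=
    (contOn_rf3 m ha).intervalIntegrable
  have hint2 : IntervalIntegrable (f (m+3)) volume a (a+1) :=
    (contOn_f (m+3) hne).intervalIntegrable
  have hftc : ∫ t in a..(a+1), (r (t-a) * f3 m t + f (m+3) t)
      = H m a (a+1) - H m a a := by
    apply intervalIntegral.integral_eq_sub_of_hasDerivAt
    · exact fun t ht => hasDerivAt_H m a (hne t ht)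
    · exact hint1.add hint2
  rw [intervalIntegral.integral_add hint1 hint2] at hftc
  have hH1 : H m a (a+1) = -(f1 m (a+1))/12 + f (m+3) (a+1)/2 := by
    unfold H
    rw [show a+1-a = (1:ℝ) by ring, r_one, r1_one, r2_one]; ring
  have hH0 : H m a a = -(f1 m a)/12 - f (m+3) a/2 := by
    unfold H
    rw [sub_self, r_zero, r1_zero, r2_zero]; ring
  unfold Rj
  rw [hH1, hH0] at hftc
  linarith


lemma f_one_eq (m : ℕ) : f (m+3) 1 = 0 := by simp [f]
lemma f1_one_eq (m : ℕ) : f1 m 1 = 0 := by simp [f1]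

lemma seqId (m M : ℕ) :
    seq (m+3) (M+1) = f (m+3) ((M:ℝ)+1)/2 + f1 m ((M:ℝ)+1)/12
      + ∑ k ∈ range M, Rj m ((k:ℝ)+1) := by
  induction M with
  | zero =>
    rw [seq_one]
    norm_num [f_one_eq, f1_one_eq]
  | succ M ih =>
    have h1 : (1:ℝ) ≤ (M:ℝ)+1 := by
      have : (0:ℝ) ≤ (M:ℝ) := Nat.cast_nonneg M
      linarith
    have hs := seq_succ (m+3) (N := M+1) (by omega)
    have hk := key_integral m (a := (M:ℝ)+1) h1
    rw [Finset.sum_range_succ]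
    push_cast at hs ⊢
    have e : (M:ℝ)+1+1 = (M:ℝ)+2 := by ring
    rw [e] at hs hk
    rw [e]
    rw [hs, ih, hk]
    linarith

/-- the dominating function for |f3| -/
noncomputable def g (m : ℕ) (x : ℝ) : ℝ :=
  ((m:ℝ)+3)*((m:ℝ)+2)*((m:ℝ)+1)*(1-1/x)^m*(1/x)^6
    + 6*((m:ℝ)+3)*((m:ℝ)+2)*(1-1/x)^(m+1)*(1/x)^5
    + 6*((m:ℝ)+3)*(1-1/x)^(m+2)*(1/x)^4

lemma contOn_g (m : ℕ) {s : Set ℝ} (hs : ∀ x ∈ s, x ≠ 0) :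
    ContinuousOn (g m) s := by
  unfold g
  have hv : ContinuousOn (fun x:ℝ => 1/x) s :=
    (continuousOn_const).div (continuousOn_id' _) hs
  have hu : ContinuousOn (fun x:ℝ => 1-1/x) s := continuousOn_const.sub hv
  exact (((continuousOn_const.mul (hu.pow m)).mul (hv.pow 6)).add
    ((continuousOn_const.mul (hu.pow (m+1))).mul (hv.pow 5))).add
    ((continuousOn_const.mul (hu.pow (m+2))).mul (hv.pow 4))

lemma f3_abs_le (m : ℕ) {x : ℝ} (hx : 1 ≤ x) : |f3 m x| ≤ g m x := by
  have hx0 : (0:ℝ) < x := by linarith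
  have hu : (0:ℝ) ≤ 1 - 1/x := by
    rw [sub_nonneg, div_le_one hx0]; linarith
  have hv : (0:ℝ) ≤ 1/x := by positivity
  have h1 : (0:ℝ) ≤ ((m:ℝ)+3)*((m:ℝ)+2)*((m:ℝ)+1)*(1-1/x)^m*(1/x)^6 := by positivity
  have h2 : (0:ℝ) ≤ 6*((m:ℝ)+3)*((m:ℝ)+2)*(1-1/x)^(m+1)*(1/x)^5 := by positivity
  have h3 : (0:ℝ) ≤ 6*((m:ℝ)+3)*(1-1/x)^(m+2)*(1/x)^4 := by positivity
  rw [abs_le]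
  unfold f3 g
  constructor <;> linarith

lemma Rj_abs_le (m : ℕ) {a : ℝ} (ha : 1 ≤ a) :
    |Rj m a| ≤ (1/48) * ∫ t in a..(a+1), g m t := by
  have hne : ∀ x ∈ Set.uIcc a (a+1), x ≠ 0 := fun x hx => ne_zero_of_uIcc ha hx
  have hint1 : IntervalIntegrable (fun t => r (t-a) * f3 m t) volume a (a+1) :=
    (contOn_rf3 m ha).intervalIntegrable
  have hintg : IntervalIntegrable (fun t => (1/48) * g m t) volume a (a+1) :=
    (((contOn_g m hne)).const_smul ((1:ℝ)/48)).intervalIntegrable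
  have h1 : |Rj m a| ≤ ∫ t in a..(a+1), |r (t-a) * f3 m t| :=
    intervalIntegral.abs_integral_le_integral_abs (by linarith)
  have h2 : (∫ t in a..(a+1), |r (t-a) * f3 m t|)
      ≤ ∫ t in a..(a+1), (1/48) * g m t := by
    apply intervalIntegral.integral_mono_on (by linarith) hint1.abs hintg
    intro t ht
    rw [abs_mul]
    have hga : |f3 m t| ≤ g m t := f3_abs_le m (le_trans ha ht.1)
    have hra : |r (t-a)| ≤ 1/48 := r_abs_le (by linarith [ht.1]) (by linarith [ht.2])
    have : (0:ℝ) ≤ |f3 m t| := abs_nonneg _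
    calc |r (t-a)| * |f3 m t| ≤ (1/48) * |f3 m t| := by
          apply mul_le_mul_of_nonneg_right hra this
      _ ≤ (1/48) * g m t := by
          apply mul_le_mul_of_nonneg_left hga (by norm_num)
  calc |Rj m a| ≤ ∫ t in a..(a+1), (1/48) * g m t := le_trans h1 h2
    _ = (1/48) * ∫ t in a..(a+1), g m t := intervalIntegral.integral_const_mul _ _

/-- explicit antiderivative of `g ∘ (x ↦ 1-1/x)` pullback polynomial -/
noncomputable def Qp (m : ℕ) (w : ℝ) : ℝ :=
  ((m:ℝ)+3)*((m:ℝ)+2)*((m:ℝ)+1) *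
    (w^(m+1)/((m:ℝ)+1) - 4*(w^(m+2)/((m:ℝ)+2)) + 6*(w^(m+3)/((m:ℝ)+3))
      - 4*(w^(m+4)/((m:ℝ)+4)) + w^(m+5)/((m:ℝ)+5))
  + 6*((m:ℝ)+3)*((m:ℝ)+2) *
    (w^(m+2)/((m:ℝ)+2) - 3*(w^(m+3)/((m:ℝ)+3)) + 3*(w^(m+4)/((m:ℝ)+4))
      - w^(m+5)/((m:ℝ)+5))
  + 6*((m:ℝ)+3) *
    (w^(m+3)/((m:ℝ)+3) - 2*(w^(m+4)/((m:ℝ)+4)) + w^(m+5)/((m:ℝ)+5))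

noncomputable def Qd (m : ℕ) (w : ℝ) : ℝ :=
  ((m:ℝ)+3)*((m:ℝ)+2)*((m:ℝ)+1)*w^m*(1-w)^4
    + 6*((m:ℝ)+3)*((m:ℝ)+2)*w^(m+1)*(1-w)^3
    + 6*((m:ℝ)+3)*w^(m+2)*(1-w)^2

lemma hasDerivAt_mono (k : ℕ) (c : ℝ) (w : ℝ) :
    HasDerivAt (fun w : ℝ => w^(k+1)/c) (((k:ℝ)+1)*w^k/c) w := by
  have := (hasDerivAt_pow (k+1) w).div_const c
  refine this.congr_deriv ?_
  push_cast; ring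

lemma hasDerivAt_Qp (m : ℕ) (w : ℝ) : HasDerivAt (Qp m) (Qd m w) w := by
  have e1 := ((((hasDerivAt_mono m ((m:ℝ)+1) w).sub
    ((hasDerivAt_mono (m+1) ((m:ℝ)+2) w).const_mul 4)).add
    ((hasDerivAt_mono (m+2) ((m:ℝ)+3) w).const_mul 6)).sub
    ((hasDerivAt_mono (m+3) ((m:ℝ)+4) w).const_mul 4)).add
    (hasDerivAt_mono (m+4) ((m:ℝ)+5) w)
  have e2 := (((hasDerivAt_mono (m+1) ((m:ℝ)+2) w).sub
    ((hasDerivAt_mono (m+2) ((m:ℝ)+3) w).const_mul 3)).add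
    ((hasDerivAt_mono (m+3) ((m:ℝ)+4) w).const_mul 3)).sub
    (hasDerivAt_mono (m+4) ((m:ℝ)+5) w)
  have e3 := ((hasDerivAt_mono (m+2) ((m:ℝ)+3) w).sub
    ((hasDerivAt_mono (m+3) ((m:ℝ)+4) w).const_mul 2)).add
    (hasDerivAt_mono (m+4) ((m:ℝ)+5) w)
  have h := ((e1.const_mul (((m:ℝ)+3)*((m:ℝ)+2)*((m:ℝ)+1))).add
    (e2.const_mul (6*((m:ℝ)+3)*((m:ℝ)+2)))).add
    (e3.const_mul (6*((m:ℝ)+3)))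
  have hm1 : ((m:ℝ)+1) ≠ 0 := by positivity
  have hm2 : ((m:ℝ)+2) ≠ 0 := by positivity
  have hm3 : ((m:ℝ)+3) ≠ 0 := by positivity
  have hm4 : ((m:ℝ)+4) ≠ 0 := by positivity
  have hm5 : ((m:ℝ)+5) ≠ 0 := by positivity
  unfold Qp Qd
  refine h.congr_deriv ?_
  push_cast
  field_simp
  ring

lemma Qp_zero (m : ℕ) : Qp m 0 = 0 := by
  unfold Qp
  simp [zero_pow]

lemma Qp_one (m : ℕ) : Qp m 1 = 72/(((m:ℝ)+4)*((m:ℝ)+5)) := by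
  have hm1 : ((m:ℝ)+1) ≠ 0 := by positivity
  have hm2 : ((m:ℝ)+2) ≠ 0 := by positivity
  have hm3 : ((m:ℝ)+3) ≠ 0 := by positivity
  have hm4 : ((m:ℝ)+4) ≠ 0 := by positivity
  have hm5 : ((m:ℝ)+5) ≠ 0 := by positivity
  unfold Qp
  simp only [one_pow]
  field_simp
  ring

lemma Qd_nonneg (m : ℕ) {w : ℝ} (h0 : 0 ≤ w) (h1 : w ≤ 1) : 0 ≤ Qd m w := by
  unfold Qd
  have : (0:ℝ) ≤ 1 - w := by linarith
  positivity

lemma Qp_le (m : ℕ) {w : ℝ} (h0 : 0 ≤ w) (h1 : w ≤ 1) :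
    Qp m w ≤ 72/(((m:ℝ)+4)*((m:ℝ)+5)) := by
  have hcont : Continuous (Qd m) := by
    unfold Qd; fun_prop
  have hftc : ∫ t in w..1, Qd m t = Qp m 1 - Qp m w :=
    intervalIntegral.integral_eq_sub_of_hasDerivAt
      (fun t _ => hasDerivAt_Qp m t) (hcont.intervalIntegrable _ _)
  have hnn : 0 ≤ ∫ t in w..1, Qd m t := by
    apply intervalIntegral.integral_nonneg h1
    intro t ht
    exact Qd_nonneg m (le_trans h0 ht.1) ht.2
  rw [← Qp_one m]
  linarith [hftc ▸ hnn]

end S18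

namespace S18

lemma hasDerivAt_G (m : ℕ) {x : ℝ} (hx : x ≠ 0) :
    HasDerivAt (fun x => Qp m (1-1/x)) (g m x) x := by
  have := (hasDerivAt_Qp m (1-1/x)).comp x (hasDerivAt_u hx)
  refine this.congr_deriv ?_
  unfold Qd g
  ring

lemma int_g (m M : ℕ) :
    ∫ t in (1:ℝ)..((M:ℝ)+1), g m t = Qp m (1-1/((M:ℝ)+1)) := by
  have hM : (0:ℝ) ≤ (M:ℝ) := Nat.cast_nonneg M
  have hne : ∀ x ∈ Set.uIcc (1:ℝ) ((M:ℝ)+1), x ≠ 0 := by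
    intro x hxx
    rw [Set.uIcc_of_le (by linarith)] at hxx
    intro h; rw [h] at hxx; linarith [hxx.1]
  have := intervalIntegral.integral_eq_sub_of_hasDerivAt
    (f := fun x => Qp m (1-1/x)) (f' := g m)
    (fun t ht => hasDerivAt_G m (hne t ht))
    ((contOn_g m hne).intervalIntegrable)
  rw [this]
  norm_num [Qp_zero]

lemma sumRj_bound (m M : ℕ) :
    |∑ k ∈ range M, Rj m ((k:ℝ)+1)| ≤ 3/(2*((m:ℝ)+4)*((m:ℝ)+5)) := by
  have h1 : |∑ k ∈ range M, Rj m ((k:ℝ)+1)| ≤ ∑ k ∈ range M, |Rj m ((k:ℝ)+1)| :=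
    Finset.abs_sum_le_sum_abs _ _
  have h2 : ∀ k ∈ range M, |Rj m ((k:ℝ)+1)|
      ≤ (1/48) * ∫ t in ((k:ℝ)+1)..(((k:ℝ)+1)+1), g m t := by
    intro k _
    have hk : (0:ℝ) ≤ (k:ℝ) := Nat.cast_nonneg k
    exact Rj_abs_le m (by linarith)
  have h3 : (∑ k ∈ range M, |Rj m ((k:ℝ)+1)|)
      ≤ ∑ k ∈ range M, (1/48) * ∫ t in ((k:ℝ)+1)..(((k:ℝ)+1)+1), g m t :=
    Finset.sum_le_sum h2
  have h4 : ∑ k ∈ range M, ((1:ℝ)/48) * ∫ t in ((k:ℝ)+1)..(((k:ℝ)+1)+1), g m t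
      = (1/48) * ∑ k ∈ range M, ∫ t in ((k:ℝ)+1)..(((k:ℝ)+1)+1), g m t := by
    rw [Finset.mul_sum]
  have hadj : ∑ k ∈ range M, ∫ t in ((k:ℝ)+1)..(((k:ℝ)+1)+1), g m t
      = ∫ t in (1:ℝ)..((M:ℝ)+1), g m t := by
    have hint : ∀ k : ℕ, k < M → IntervalIntegrable (g m) volume
        ((fun k : ℕ => (k:ℝ)+1) k) ((fun k : ℕ => (k:ℝ)+1) (k+1)) := by
      intro k _
      apply ((contOn_g m ?_)).intervalIntegrable
      intro x hxx
      have hk : (0:ℝ) ≤ (k:ℝ) := Nat.cast_nonneg k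
      have hle : ((k:ℝ)+1 : ℝ) ≤ ((k+1:ℕ):ℝ)+1 := by push_cast; linarith
      rw [Set.uIcc_of_le hle] at hxx
      have h1 := hxx.1
      intro h; rw [h] at h1; linarith
    have := intervalIntegral.sum_integral_adjacent_intervals (μ := volume)
      (f := g m) (a := fun k : ℕ => (k:ℝ)+1) (n := M) hint
    simp only [Nat.cast_zero, zero_add] at this
    rw [← this]
    apply Finset.sum_congr rfl
    intro k _
    have : ((k+1:ℕ):ℝ)+1 = (k:ℝ)+1+1 := by push_cast; ring
    rw [this]
  have hw0 : (0:ℝ) ≤ 1 - 1/((M:ℝ)+1) := by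
    rw [sub_nonneg]
    have hM : (0:ℝ) ≤ (M:ℝ) := Nat.cast_nonneg M
    apply div_le_one_of_le₀ (by linarith) (by linarith)
  have hw1 : 1 - 1/((M:ℝ)+1) ≤ 1 := by
    have : (0:ℝ) < 1/((M:ℝ)+1) := by positivity
    linarith
  have h5 : ∫ t in (1:ℝ)..((M:ℝ)+1), g m t ≤ 72/(((m:ℝ)+4)*((m:ℝ)+5)) := by
    rw [int_g m M]
    exact Qp_le m hw0 hw1
  have hfin : (1:ℝ)/48 * (72/(((m:ℝ)+4)*((m:ℝ)+5))) = 3/(2*((m:ℝ)+4)*((m:ℝ)+5)) := by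
    field_simp
    ring
  calc |∑ k ∈ range M, Rj m ((k:ℝ)+1)|
      ≤ (1/48) * ∫ t in (1:ℝ)..((M:ℝ)+1), g m t := by
        rw [← hadj]; linarith [h1, h3, h4.le]
    _ ≤ (1/48) * (72/(((m:ℝ)+4)*((m:ℝ)+5))) := by
        apply mul_le_mul_of_nonneg_left h5 (by norm_num)
    _ = 3/(2*((m:ℝ)+4)*((m:ℝ)+5)) := hfin

lemma lim_f (n : ℕ) : Tendsto (fun M : ℕ => f n ((M:ℝ)+1)) atTop (𝓝 1) := by
  have h0 : Tendsto (fun M : ℕ => 1/((M:ℝ)+1)) atTop (𝓝 0) :=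
    tendsto_one_div_add_atTop_nhds_zero_nat
  have h1 : Tendsto (fun M : ℕ => 1 - 1/((M:ℝ)+1)) atTop (𝓝 1) := by
    simpa using (tendsto_const_nhds (x := (1:ℝ)) |>.sub h0)
  have := h1.pow n
  simpa [f, one_div] using this

lemma lim_f1 (m : ℕ) : Tendsto (fun M : ℕ => f1 m ((M:ℝ)+1)) atTop (𝓝 0) := by
  have h0 : Tendsto (fun M : ℕ => 1/((M:ℝ)+1)) atTop (𝓝 0) :=
    tendsto_one_div_add_atTop_nhds_zero_nat
  have h1 : Tendsto (fun M : ℕ => 1 - 1/((M:ℝ)+1)) atTop (𝓝 1) := by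
    simpa using (tendsto_const_nhds (x := (1:ℝ)) |>.sub h0)
  have := (((h1.pow (m+2)).const_mul ((m:ℝ)+3)).mul (h0.pow 2))
  simpa [f1, one_div, inv_pow] using this

lemma D_bound (m : ℕ) :
    |(⨆ N, seq (m+3) N) - 1/2| ≤ 3/(2*((m:ℝ)+4)*((m:ℝ)+5)) := by
  set c := 3/(2*((m:ℝ)+4)*((m:ℝ)+5)) with hc
  have hT : Tendsto (fun M : ℕ => |seq (m+3) (M+1) - 1/2|) atTop
      (𝓝 |(⨆ N, seq (m+3) N) - 1/2|) :=
    ((((part1 (m+3)).comp (tendsto_add_atTop_nat 1)).sub_const _)).abs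
  have hB : Tendsto (fun M : ℕ =>
      |f (m+3) ((M:ℝ)+1) - 1|/2 + |f1 m ((M:ℝ)+1)|/12 + c) atTop
      (𝓝 (|1-1|/2 + |(0:ℝ)|/12 + c)) := by
    apply Tendsto.add _ tendsto_const_nhds
    exact ((((lim_f (m+3)).sub_const 1).abs.div_const 2).add
      ((lim_f1 m).abs.div_const 12))
  have hle : ∀ M : ℕ, |seq (m+3) (M+1) - 1/2|
      ≤ |f (m+3) ((M:ℝ)+1) - 1|/2 + |f1 m ((M:ℝ)+1)|/12 + c := by
    intro M
    rw [seqId m M]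
    have hs := sumRj_bound m M
    have e1 : f (m+3) ((M:ℝ)+1)/2 + f1 m ((M:ℝ)+1)/12 + (∑ k ∈ range M, Rj m ((k:ℝ)+1))
        - 1/2 = (f (m+3) ((M:ℝ)+1) - 1)/2 + f1 m ((M:ℝ)+1)/12
          + ∑ k ∈ range M, Rj m ((k:ℝ)+1) := by ring
    rw [e1]
    calc |(f (m+3) ((M:ℝ)+1) - 1)/2 + f1 m ((M:ℝ)+1)/12 + ∑ k ∈ range M, Rj m ((k:ℝ)+1)|
        ≤ |(f (m+3) ((M:ℝ)+1) - 1)/2 + f1 m ((M:ℝ)+1)/12| + |∑ k ∈ range M, Rj m ((k:ℝ)+1)| :=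
          abs_add_le _ _
      _ ≤ (|(f (m+3) ((M:ℝ)+1) - 1)/2| + |f1 m ((M:ℝ)+1)/12|) + c := by
          have := abs_add_le ((f (m+3) ((M:ℝ)+1) - 1)/2) (f1 m ((M:ℝ)+1)/12)
          linarith
      _ = |f (m+3) ((M:ℝ)+1) - 1|/2 + |f1 m ((M:ℝ)+1)|/12 + c := by
          rw [abs_div, abs_div]
          norm_num
  have := le_of_tendsto_of_tendsto' hT hB hle
  simpa using this

end S18

/-- For `n ≥ 1` let
`D n = lim_{N→∞} [∑_{j=1}^N (1 - 1/j)^n - ∫_1^N (1 - 1/x)^n dx]`.  This limit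
exists for every `n`, and `D n = 1/2 + o(1/n)`, i.e. `n (D n - 1/2) → 0`. -/
theorem stmt_18 :
    ∃ D : ℕ → ℝ,
      (∀ n : ℕ, 1 ≤ n →
        Tendsto (fun N : ℕ =>
            (∑ j ∈ Icc 1 N, (1 - 1 / (j : ℝ)) ^ n)
              - ∫ x in Set.Icc (1 : ℝ) (N : ℝ), (1 - 1 / x) ^ n)
          atTop (𝓝 (D n))) ∧
      Tendsto (fun n : ℕ => (n : ℝ) * (D n - 1 / 2)) atTop (𝓝 0) := by
  refine ⟨fun n => ⨆ N, S18.seq n N, fun n _ => S18.part1 n, ?_⟩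
  apply squeeze_zero_norm' (a := fun n : ℕ => 3/(n:ℝ))
  · filter_upwards [eventually_ge_atTop 3] with n hn
    obtain ⟨m, rfl⟩ : ∃ m, n = m + 3 := ⟨n - 3, by omega⟩
    have hD := S18.D_bound m
    have hm : (0:ℝ) ≤ (m:ℝ) := Nat.cast_nonneg m
    rw [Real.norm_eq_abs, abs_mul,
      abs_of_nonneg (by positivity : (0:ℝ) ≤ ((m+3:ℕ):ℝ))]
    push_cast
    calc ((m:ℝ)+3) * |(⨆ N, S18.seq (m+3) N) - 1/2|
        ≤ ((m:ℝ)+3) * (3/(2*((m:ℝ)+4)*((m:ℝ)+5))) :=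
          mul_le_mul_of_nonneg_left hD (by linarith)
      _ ≤ 3/((m:ℝ)+3) := by
          have h1 : (0:ℝ) < 2*((m:ℝ)+4)*((m:ℝ)+5) := by positivity
          have h2 : (0:ℝ) < (m:ℝ)+3 := by positivity
          rw [mul_div_assoc', div_le_div_iff₀ h1 h2]
          nlinarith
  · exact tendsto_const_div_atTop_nhds_zero_nat 3
end
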